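/- arXiv:1909.04268 — 10 statements merged into one kernel-verified Lean document; each statement's English description precedes it below -/
import Mathlib

section
/- If a distribution D over subsets of a matroid's ground set satisfies E[|R ∩ F|] ≤ α · E[rank(R ∩ F)] for every subset F of the ground set (where R ∼ D), then for every nonnegative weight vector w, E[rank_w(R)] ≥ (1/α) · E[w(R)]. -/
open Finset BigOperators
open scoped Classical

structure FinMatroid (γ : Type*) [DecidableEq γ] [Fintype γ] where
  Indep : Finset γ → Prop
  indep_empty : Indep ∅
  indep_subset : ∀ ⦃A B : Finset γ⦄, Indep B → A ⊆ B → Indep A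
  indep_exchange : ∀ ⦃A B : Finset γ⦄, Indep A → Indep B → A.card < B.card →
    ∃ x ∈ B, x ∉ A ∧ Indep (insert x A)

variable {γ : Type*} [DecidableEq γ] [Fintype γ]

/-- The rank of a set `A`: maximum cardinality of an independent subset of `A`. -/
noncomputable def FinMatroid.rank (M : FinMatroid γ) (A : Finset γ) : ℕ :=
  (A.powerset.filter fun S => M.Indep S).sup Finset.card

/-- The weighted rank of a set `A`: maximum weight of an independent subset of `A`. -/
noncomputable def FinMatroid.wrank (M : FinMatroid γ) (w : γ → ℝ) (A : Finset γ) : ℝ :=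
  (A.powerset.filter fun S => M.Indep S).sup'
    ⟨∅, by simp [M.indep_empty]⟩ (fun S => ∑ i ∈ S, w i)

/-- A distribution over subsets of the ground set. -/
structure FinDist (γ : Type*) [DecidableEq γ] [Fintype γ] where
  p : Finset γ → ℝ
  nonneg : ∀ S, 0 ≤ p S
  sum_one : ∑ S : Finset γ, p S = 1

/-- Marginal probability of element `i` under distribution `D`. -/
noncomputable def FinDist.marg (D : FinDist γ) (i : γ) : ℝ :=
  ∑ R : Finset γ, D.p R * (if i ∈ R then 1 else 0)

/-- A (randomized) contention resolution map: `q R S` is the probability that the map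
outputs `S` on input `R`; the output is always an independent subset of the input. -/
structure CRM (M : FinMatroid γ) where
  q : Finset γ → Finset γ → ℝ
  nonneg : ∀ R S, 0 ≤ q R S
  sum_one : ∀ R, ∑ S : Finset γ, q R S = 1
  feasible : ∀ R S, q R S ≠ 0 → S ⊆ R ∧ M.Indep S

/-- Probability that element `i` is selected by the CRM `φ` when the input is drawn from `D`. -/
noncomputable def selProb (M : FinMatroid γ) (D : FinDist γ) (φ : CRM M) (i : γ) : ℝ :=
  ∑ R : Finset γ, D.p R * ∑ S : Finset γ, φ.q R S * (if i ∈ S then 1 else 0)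

/-- `φ` is `a`-competitive for `D` : `Pr[i ∈ R] ≤ a · Pr[i ∈ φ(R)]` for all `i`. -/
def Competitive (M : FinMatroid γ) (D : FinDist γ) (a : ℝ) (φ : CRM M) : Prop :=
  ∀ i : γ, D.marg i ≤ a * selProb M D φ i

/-- `D` is `a`-uncontentious: it admits an `a`-competitive contention resolution map. -/
def Uncontentious (M : FinMatroid γ) (D : FinDist γ) (a : ℝ) : Prop :=
  ∃ φ : CRM M, Competitive M D a φ

/-- `D` is `a`-uncontentious, weighted-rank form: `E[rank_w(R)] ≥ (1/a)·E[w(R)]` for all `w ≥ 0`. -/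
def UncontentiousW (M : FinMatroid γ) (D : FinDist γ) (a : ℝ) : Prop :=
  ∀ w : γ → ℝ, (∀ i, 0 ≤ w i) →
    ∑ R : Finset γ, D.p R * M.wrank w R ≥ (1 / a) * ∑ R : Finset γ, D.p R * ∑ i ∈ R, w i

lemma wrank_nonneg (M : FinMatroid γ) (w : γ → ℝ) (hw : ∀ i, 0 ≤ w i) (A : Finset γ) :
    0 ≤ M.wrank w A := by
  have h0 : (∅ : Finset γ) ∈ A.powerset.filter (fun S => M.Indep S) := by
    simp [M.indep_empty]
  have := Finset.le_sup' (fun S => ∑ i ∈ S, w i) h0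
  simpa [FinMatroid.wrank] using this

lemma exists_rank_set (M : FinMatroid γ) (A : Finset γ) :
    ∃ T, T ⊆ A ∧ M.Indep T ∧ T.card = M.rank A := by
  obtain ⟨T, hT, hc⟩ := Finset.exists_mem_eq_sup (A.powerset.filter fun S => M.Indep S)
    ⟨∅, by simp [M.indep_empty]⟩ Finset.card
  simp only [Finset.mem_filter, Finset.mem_powerset] at hT
  exact ⟨T, hT.1, hT.2, hc.symm⟩

lemma exists_basis_ext (M : FinMatroid γ) (A : Finset γ) :
    ∀ n (S : Finset γ), M.Indep S → S ⊆ A → M.rank A - S.card ≤ n →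
      ∃ B, S ⊆ B ∧ B ⊆ A ∧ M.Indep B ∧ M.rank A ≤ B.card := by
  intro n
  induction n with
  | zero =>
    intro S hS hSA hle
    exact ⟨S, Finset.Subset.refl _, hSA, hS, by omega⟩
  | succ n ih =>
    intro S hS hSA hle
    by_cases hc : M.rank A ≤ S.card
    · exact ⟨S, Finset.Subset.refl _, hSA, hS, hc⟩
    · push_neg at hc
      obtain ⟨T, hTA, hT, hTc⟩ := exists_rank_set M A
      obtain ⟨x, hxT, hxS, hins⟩ := M.indep_exchange hS hT (hTc ▸ hc)
      have hcard : (insert x S).card = S.card + 1 := Finset.card_insert_of_notMem hxS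
      obtain ⟨B, hB1, hB2, hB3, hB4⟩ :=
        ih (insert x S) hins (Finset.insert_subset (hTA hxT) hSA) (by omega)
      exact ⟨B, (Finset.subset_insert x S).trans hB1, hB2, hB3, hB4⟩

lemma wrank_split (M : FinMatroid γ) (w w' : γ → ℝ) (m : ℝ) (hm : 0 ≤ m)
    (F : Finset γ) (hw' : ∀ i, 0 ≤ w' i) (hzero : ∀ i ∉ F, w' i = 0)
    (hsplit : ∀ i, w i = w' i + m * (if i ∈ F then 1 else 0))
    (A : Finset γ) :
    M.wrank w' A + m * (M.rank (A ∩ F) : ℝ) ≤ M.wrank w A := by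
  obtain ⟨S, hSmem, hSval⟩ := Finset.exists_mem_eq_sup'
    (s := A.powerset.filter fun S => M.Indep S)
    (H := ⟨∅, by simp [M.indep_empty]⟩) (f := fun S => ∑ i ∈ S, w' i)
  simp only [Finset.mem_filter, Finset.mem_powerset] at hSmem
  obtain ⟨hSA, hSind⟩ := hSmem
  have hS'ind : M.Indep (S ∩ F) := M.indep_subset hSind Finset.inter_subset_left
  have hS'sub : S ∩ F ⊆ A ∩ F := Finset.inter_subset_inter hSA (Finset.Subset.refl F)
  obtain ⟨B, hSB, hBAF, hBind, hBcard⟩ :=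
    exists_basis_ext M (A ∩ F) _ (S ∩ F) hS'ind hS'sub le_rfl
  have hBA : B ⊆ A := hBAF.trans Finset.inter_subset_left
  have hBF : B ⊆ F := hBAF.trans Finset.inter_subset_right
  have h1 : ∑ i ∈ B, w i ≤ M.wrank w A :=
    Finset.le_sup' (fun S => ∑ i ∈ S, w i) (by simp [hBA, hBind])
  have h2 : ∑ i ∈ B, w i = ∑ i ∈ B, w' i + m * B.card := by
    rw [Finset.sum_congr rfl fun i _ => hsplit i, Finset.sum_add_distrib]
    congr 1
    rw [Finset.sum_congr rfl fun i hi => by rw [if_pos (hBF hi)]]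
    simp [mul_comm]
  have h3 : M.wrank w' A = ∑ i ∈ S ∩ F, w' i := by
    rw [FinMatroid.wrank, hSval]
    rw [← Finset.sum_filter_add_sum_filter_not S (fun i => i ∈ F)]
    have : ∑ i ∈ S.filter (fun i => i ∉ F), w' i = 0 :=
      Finset.sum_eq_zero fun i hi => hzero i (Finset.mem_filter.mp hi).2
    rw [this, add_zero, Finset.filter_mem_eq_inter]
  have h4 : ∑ i ∈ S ∩ F, w' i ≤ ∑ i ∈ B, w' i :=
    Finset.sum_le_sum_of_subset_of_nonneg hSB fun i _ _ => hw' i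
  have h5 : m * (M.rank (A ∩ F) : ℝ) ≤ m * B.card := by
    have := hBcard
    exact mul_le_mul_of_nonneg_left (by exact_mod_cast this) hm
  calc M.wrank w' A + m * (M.rank (A ∩ F) : ℝ)
      ≤ ∑ i ∈ B, w' i + m * B.card := by rw [h3]; exact add_le_add h4 h5
    _ = ∑ i ∈ B, w i := h2.symm
    _ ≤ M.wrank w A := h1

/-- if `E[|R ∩ F|] ≤ a · E[rank(R ∩ F)]` for every `F`, then for every
nonnegative weight vector `w`, `E[rank_w(R)] ≥ (1/a) · E[w(R)]`. -/
theorem stmt1 (M : FinMatroid γ) (D : FinDist γ) (a : ℝ) (ha : 1 ≤ a)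
    (h : ∀ F : Finset γ,
      ∑ R : Finset γ, D.p R * ((R ∩ F).card : ℝ) ≤
        a * ∑ R : Finset γ, D.p R * (M.rank (R ∩ F) : ℝ)) :
    ∀ w : γ → ℝ, (∀ i, 0 ≤ w i) →
      ∑ R : Finset γ, D.p R * M.wrank w R ≥
        (1 / a) * ∑ R : Finset γ, D.p R * ∑ i ∈ R, w i := by
  have hapos : (0:ℝ) < a := lt_of_lt_of_le one_pos ha
  suffices H : ∀ n (w : γ → ℝ), (∀ i, 0 ≤ w i) →
      (Finset.univ.filter fun i => 0 < w i).card ≤ n →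
      (1 / a) * ∑ R : Finset γ, D.p R * ∑ i ∈ R, w i ≤
        ∑ R : Finset γ, D.p R * M.wrank w R by
    intro w hw
    exact H _ w hw le_rfl
  intro n
  induction n with
  | zero =>
    intro w hw hcard
    have hwz : ∀ i, w i = 0 := by
      intro i
      by_contra hne
      have hi : i ∈ Finset.univ.filter fun i => 0 < w i := by
        simp [lt_of_le_of_ne (hw i) (Ne.symm hne)]
      have := Finset.card_pos.mpr ⟨i, hi⟩
      omega
    have hz : ∑ R : Finset γ, D.p R * ∑ i ∈ R, w i = 0 := by simp [hwz]
    rw [hz, mul_zero]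
    exact Finset.sum_nonneg fun R _ => mul_nonneg (D.nonneg R) (wrank_nonneg M w hw R)
  | succ n ih =>
    intro w hw hcard
    set F := Finset.univ.filter fun i => 0 < w i with hF
    by_cases hFne : F.Nonempty
    · set m := F.inf' hFne w with hmdef
      obtain ⟨i0, hi0F, hi0⟩ := Finset.exists_mem_eq_inf' hFne w
      have hmle : ∀ i ∈ F, m ≤ w i := fun i hi => Finset.inf'_le w hi
      have hmpos : 0 < m := by
        rw [hmdef, hi0]
        exact (Finset.mem_filter.mp hi0F).2
      set w' : γ → ℝ := fun i => if i ∈ F then w i - m else 0 with hw'def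
      have hw' : ∀ i, 0 ≤ w' i := by
        intro i
        simp only [hw'def]
        split
        · linarith [hmle i (by assumption)]
        · exact le_rfl
      have hzero : ∀ i ∉ F, w' i = 0 := by intro i hi; simp [hw'def, hi]
      have hsplit : ∀ i, w i = w' i + m * (if i ∈ F then 1 else 0) := by
        intro i
        by_cases hi : i ∈ F
        · simp [hw'def, hi]
        · have : w i = 0 := by
            have : ¬ 0 < w i := by simpa [hF] using hi
            linarith [hw i]
          simp [hw'def, hi, this]
      have hsupp : (Finset.univ.filter fun i => 0 < w' i) ⊆ F.erase i0 := by
        intro i hi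
        simp only [Finset.mem_filter] at hi
        have hiF : i ∈ F := by
          by_contra hc
          rw [hzero i hc] at hi
          exact lt_irrefl 0 hi.2
        refine Finset.mem_erase.mpr ⟨?_, hiF⟩
        intro hieq
        subst hieq
        have : w' i = 0 := by simp [hw'def, hiF, hmdef, ← hi0]
        rw [this] at hi
        exact lt_irrefl 0 hi.2
      have hsuppcard : (Finset.univ.filter fun i => 0 < w' i).card ≤ n := by
        have h1 := Finset.card_le_card hsupp
        have h2 : (F.erase i0).card = F.card - 1 := Finset.card_erase_of_mem hi0F
        have h3 : 1 ≤ F.card := Finset.card_pos.mpr hFne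
        omega
      have IH := ih w' hw' hsuppcard
      have hsum : ∀ R : Finset γ, ∑ i ∈ R, w i = ∑ i ∈ R, w' i + m * ((R ∩ F).card : ℝ) := by
        intro R
        rw [Finset.sum_congr rfl fun i _ => hsplit i, Finset.sum_add_distrib]
        congr 1
        rw [← Finset.mul_sum]
        congr 1
        rw [Finset.sum_ite_mem]
        simp
      have hwr : ∀ R : Finset γ, M.wrank w' R + m * (M.rank (R ∩ F) : ℝ) ≤ M.wrank w R :=
        fun R => wrank_split M w w' m (le_of_lt hmpos) F hw' hzero hsplit R
      -- abbreviations
      set X1 := ∑ R : Finset γ, D.p R * ∑ i ∈ R, w' i with hX1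
      set X2 := ∑ R : Finset γ, D.p R * ((R ∩ F).card : ℝ) with hX2
      set Y1 := ∑ R : Finset γ, D.p R * M.wrank w' R with hY1
      set Y2 := ∑ R : Finset γ, D.p R * (M.rank (R ∩ F) : ℝ) with hY2
      set Z := ∑ R : Finset γ, D.p R * M.wrank w R with hZ
      have e1 : ∑ R : Finset γ, D.p R * ∑ i ∈ R, w i = X1 + m * X2 := by
        rw [hX1, hX2, Finset.mul_sum, ← Finset.sum_add_distrib]
        apply Finset.sum_congr rfl
        intro R _
        rw [hsum R]
        ring
      have e2 : Y1 + m * Y2 ≤ Z := by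
        rw [hY1, hY2, hZ, Finset.mul_sum, ← Finset.sum_add_distrib]
        apply Finset.sum_le_sum
        intro R _
        have := hwr R
        have hp := D.nonneg R
        nlinarith [mul_le_mul_of_nonneg_left this hp]
      have e3 : X2 ≤ a * Y2 := h F
      rw [e1, div_mul_eq_mul_div, one_mul, div_le_iff₀ hapos]
      have IH' : X1 ≤ a * Y1 := by
        rw [div_mul_eq_mul_div, one_mul, div_le_iff₀ hapos] at IH
        linarith [IH]
      nlinarith [mul_le_mul_of_nonneg_left e3 (le_of_lt hmpos),
        mul_le_mul_of_nonneg_left e2 (le_of_lt hapos)]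
    · have : F.card = 0 := by
        rw [Finset.card_eq_zero]
        exact Finset.not_nonempty_iff_eq_empty.mp hFne
      exact ih w hw (by rw [← hF]; omega)
end

section
/- If a distribution D over subsets of a matroid's ground set satisfies E[rank_w(R)] ≥ (1/α)·E[w(R)] for every nonnegative weight vector w, then there exists an α-competitive contention resolution map for D. -/
open Finset BigOperators
open scoped Classical

variable {γ : Type*} [DecidableEq γ] [Fintype γ]

open Pointwise

-- auxiliary vector
noncomputable def crmVec (D : FinDist γ) (f : Finset γ → Finset γ) : γ → ℝ :=
  fun i => ∑ R : Finset γ, D.p R * (if i ∈ f R then 1 else 0)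

lemma sum_mul_crmVec (D : FinDist γ) (w : γ → ℝ) (g : Finset γ → Finset γ) :
    ∑ i : γ, w i * crmVec D g i = ∑ R : Finset γ, D.p R * ∑ i ∈ g R, w i := by
  unfold crmVec
  simp_rw [Finset.mul_sum]
  rw [Finset.sum_comm]
  refine Finset.sum_congr rfl fun R _ => ?_
  have : ∀ i : γ, w i * (D.p R * (if i ∈ g R then 1 else 0))
      = (if i ∈ g R then D.p R * w i else 0) := by
    intro i; split <;> ring
  rw [Finset.sum_congr rfl fun i _ => this i, Finset.sum_ite_mem, Finset.univ_inter,
    ← Finset.mul_sum]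

lemma sum_w_marg (D : FinDist γ) (w : γ → ℝ) :
    ∑ R : Finset γ, D.p R * ∑ i ∈ R, w i = ∑ i : γ, w i * D.marg i := by
  have := sum_mul_crmVec D w id
  simpa [crmVec, FinDist.marg] using this.symm

open Pointwise in
lemma marg_div_mem (M : FinMatroid γ) (D : FinDist γ) (a : ℝ) (ha : 1 ≤ a)
    (h : ∀ w : γ → ℝ, (∀ i, 0 ≤ w i) →
      ∑ R : Finset γ, D.p R * M.wrank w R ≥
        (1 / a) * ∑ R : Finset γ, D.p R * ∑ i ∈ R, w i) :
    (fun i => D.marg i / a) ∈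
      convexHull ℝ (↑((Finset.univ.filter fun f : Finset γ → Finset γ =>
          ∀ R, f R ⊆ R ∧ M.Indep (f R)).image (crmVec D)))
        + {c : γ → ℝ | ∀ i, c i ≤ 0} := by
  have ha0 : (0:ℝ) < a := lt_of_lt_of_le one_pos ha
  set F : Finset (Finset γ → Finset γ) :=
    Finset.univ.filter fun f => ∀ R, f R ⊆ R ∧ M.Indep (f R) with hF
  set C : Set (γ → ℝ) := {c | ∀ i, c i ≤ 0} with hC
  set K : Set (γ → ℝ) := convexHull ℝ ↑(F.image (crmVec D)) + C with hK
  by_contra hx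
  have hCconv : Convex ℝ C := by
    intro p hp q hq s t hs ht hst i
    have := hp i; have := hq i
    have : s * p i + t * q i ≤ 0 := by nlinarith
    simpa using this
  have hCclosed : IsClosed C := by
    have : C = ⋂ i : γ, {c : γ → ℝ | c i ≤ 0} := by
      ext c; simp [hC, Set.mem_iInter]
    rw [this]
    exact isClosed_iInter fun i => isClosed_le (continuous_apply i) continuous_const
  have hKconv : Convex ℝ K := (convex_convexHull ℝ _).add hCconv
  have hKclosed : IsClosed K :=
    hCclosed.add_left_of_isCompact ((F.image (crmVec D)).finite_toSet.isCompact_convexHull ℝ)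
  obtain ⟨φ, u, hφx, hφK⟩ := geometric_hahn_banach_point_closed hKconv hKclosed hx
  -- the empty-set map
  have hemptyF : (fun _ : Finset γ => (∅ : Finset γ)) ∈ F := by
    simp [hF, M.indep_empty]
  have hvempty : crmVec D (fun _ => ∅) = 0 := by
    funext i; simp [crmVec]
  have h0hull : (0 : γ → ℝ) ∈ convexHull ℝ (↑(F.image (crmVec D)) : Set (γ → ℝ)) := by
    apply subset_convexHull
    rw [← hvempty]
    exact Finset.mem_coe.mpr (Finset.mem_image_of_mem _ hemptyF)
  have hCK : ∀ c ∈ C, c ∈ K := by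
    intro c hc
    have := Set.add_mem_add h0hull hc
    rw [zero_add] at this
    exact this
  -- basis vectors and weights
  set e : γ → γ → ℝ := fun i => fun j => if i = j then 1 else 0 with he
  set w : γ → ℝ := fun i => -(φ (e i)) with hw
  have hwnn : ∀ i, 0 ≤ w i := by
    intro i
    by_contra hneg
    push_neg at hneg
    have hfe : 0 < φ (e i) := by simpa [hw, neg_neg] using hneg
    set s : ℝ := -(|u| + 1) / φ (e i) with hs
    have habs : (0:ℝ) ≤ |u| := abs_nonneg u
    have hs0 : s ≤ 0 := div_nonpos_of_nonpos_of_nonneg (by linarith) (le_of_lt hfe)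
    have hmem : (s • e i) ∈ C := by
      intro j
      simp only [Pi.smul_apply, smul_eq_mul, he]
      by_cases hji : i = j
      · subst hji; simpa using hs0
      · simp [hji]
    have := hφK _ (hCK _ hmem)
    rw [map_smul] at this
    have hval : s * φ (e i) = -(|u| + 1) := by
      rw [hs, div_mul_cancel₀ _ hfe.ne']
    rw [smul_eq_mul, hval] at this
    have : u < -(|u| + 1) := this
    have h1 : -u ≤ |u| := neg_le_abs u
    linarith
  have hφeq : ∀ z : γ → ℝ, φ z = -∑ i : γ, w i * z i := by
    intro z
    have h1 : φ z = ∑ i : γ, z i * φ (e i) := by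
      conv_lhs => rw [pi_eq_sum_univ z]
      rw [map_sum]
      simp_rw [map_smul, smul_eq_mul]
      rfl
    have h2 : ∀ i : γ, w i * z i = -(z i * φ (e i)) := by
      intro i; simp only [hw]; ring
    rw [h1, Finset.sum_congr rfl fun i _ => h2 i, Finset.sum_neg_distrib, neg_neg]
  -- now derive contradiction with h
  have hmain := h w hwnn
  rw [sum_w_marg] at hmain
  -- choose max-weight independent sets
  have hchoice : ∀ R : Finset γ, ∃ S : Finset γ, S ⊆ R ∧ M.Indep S ∧
      (∑ i ∈ S, w i) = M.wrank w R := by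
    intro R
    obtain ⟨S, hS, hSe⟩ := Finset.exists_mem_eq_sup'
      (⟨∅, by simp [M.indep_empty]⟩ : (R.powerset.filter fun S => M.Indep S).Nonempty)
      (fun S => ∑ i ∈ S, w i)
    rw [Finset.mem_filter, Finset.mem_powerset] at hS
    exact ⟨S, hS.1, hS.2, hSe.symm⟩
  choose fstar hf1 hf2 hf3 using hchoice
  have hfstarF : fstar ∈ F := by
    rw [hF, Finset.mem_filter]
    exact ⟨Finset.mem_univ _, fun R => ⟨hf1 R, hf2 R⟩⟩
  have hvK : crmVec D fstar ∈ K := by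
    have h1 : crmVec D fstar ∈ convexHull ℝ (↑(F.image (crmVec D)) : Set (γ → ℝ)) :=
      subset_convexHull ℝ _ (Finset.mem_coe.mpr (Finset.mem_image_of_mem _ hfstarF))
    have h2 : (0 : γ → ℝ) ∈ C := fun i => le_refl 0
    have := Set.add_mem_add h1 h2
    rwa [add_zero] at this
  have hlt : u < -(∑ R : Finset γ, D.p R * M.wrank w R) := by
    have := hφK _ hvK
    rw [hφeq] at this
    rw [sum_mul_crmVec] at this
    have heq : ∑ R : Finset γ, D.p R * ∑ i ∈ fstar R, w i
        = ∑ R : Finset γ, D.p R * M.wrank w R :=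
      Finset.sum_congr rfl fun R _ => by rw [hf3 R]
    rwa [heq] at this
  have hx' : -((1/a) * ∑ i : γ, w i * D.marg i) < u := by
    have := hφx
    rw [hφeq] at this
    have heq : ∑ i : γ, w i * (D.marg i / a) = (1/a) * ∑ i : γ, w i * D.marg i := by
      rw [Finset.mul_sum]
      exact Finset.sum_congr rfl fun i _ => by ring
    rw [heq] at this
    exact this
  linarith [hmain]

/-- if `E[rank_w(R)] ≥ (1/a)·E[w(R)]` for every nonnegative `w`, then
there exists an `a`-competitive contention resolution map for `D`. -/
theorem stmt2 (M : FinMatroid γ) (D : FinDist γ) (a : ℝ) (ha : 1 ≤ a)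
    (h : ∀ w : γ → ℝ, (∀ i, 0 ≤ w i) →
      ∑ R : Finset γ, D.p R * M.wrank w R ≥
        (1 / a) * ∑ R : Finset γ, D.p R * ∑ i ∈ R, w i) :
    ∃ phi : CRM M, Competitive M D a phi := by
  have ha0 : (0:ℝ) < a := lt_of_lt_of_le one_pos ha
  have hmem := marg_div_mem M D a ha h
  set F : Finset (Finset γ → Finset γ) :=
    Finset.univ.filter fun f => ∀ R, f R ⊆ R ∧ M.Indep (f R) with hF
  rw [Set.mem_add] at hmem
  obtain ⟨z, hz, c, hc, hzc⟩ := hmem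
  rw [Finset.convexHull_eq] at hz
  obtain ⟨wt, hwt0, hwt1, hcm⟩ := hz
  -- pick a representative map for each vector
  set g : (γ → ℝ) → (Finset γ → Finset γ) := fun y =>
    if hy : y ∈ F.image (crmVec D) then (Finset.mem_image.mp hy).choose
    else fun _ => ∅ with hg
  have hgF : ∀ y ∈ F.image (crmVec D), g y ∈ F := by
    intro y hy
    rw [hg]; dsimp only; rw [dif_pos hy]
    exact (Finset.mem_image.mp hy).choose_spec.1
  have hgv : ∀ y ∈ F.image (crmVec D), crmVec D (g y) = y := by
    intro y hy
    rw [hg]; dsimp only; rw [dif_pos hy]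
    exact (Finset.mem_image.mp hy).choose_spec.2
  have hgprop : ∀ y ∈ F.image (crmVec D), ∀ R, g y R ⊆ R ∧ M.Indep (g y R) := by
    intro y hy
    have := hgF y hy
    rw [hF, Finset.mem_filter] at this
    exact this.2
  set qdef : Finset γ → Finset γ → ℝ :=
    fun R S => ∑ y ∈ F.image (crmVec D), if g y R = S then wt y else 0 with hqdef
  have hq1 : ∀ R S, 0 ≤ qdef R S := by
    intro R S
    refine Finset.sum_nonneg fun y hy => ?_
    split
    · exact hwt0 y hy
    · exact le_refl 0
  have hq2 : ∀ R, ∑ S : Finset γ, qdef R S = 1 := by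
    intro R
    rw [hqdef]; dsimp only
    rw [Finset.sum_comm, ← hwt1]
    refine Finset.sum_congr rfl fun y hy => ?_
    simp [Finset.sum_ite_eq]
  have hq3 : ∀ R S, qdef R S ≠ 0 → S ⊆ R ∧ M.Indep S := by
    intro R S hq
    obtain ⟨y, hy, hne⟩ := Finset.exists_ne_zero_of_sum_ne_zero hq
    have hgyRS : g y R = S := by
      by_contra hcon
      rw [if_neg hcon] at hne
      exact hne rfl
    rw [← hgyRS]
    exact hgprop y hy R
  refine ⟨⟨qdef, hq1, hq2, hq3⟩, ?_⟩
  intro i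
  have hzi : z i = ∑ y ∈ F.image (crmVec D), wt y * y i := by
    rw [← hcm, Finset.centerMass_eq_of_sum_1 _ _ hwt1]
    rw [Finset.sum_apply]
    exact Finset.sum_congr rfl fun y _ => by simp
  have hsel : selProb M D ⟨qdef, hq1, hq2, hq3⟩ i = z i := by
    show (∑ R : Finset γ, D.p R * ∑ S : Finset γ,
      qdef R S * (if i ∈ S then 1 else 0)) = z i
    have hinner : ∀ R : Finset γ, (∑ S : Finset γ,
        qdef R S * (if i ∈ S then 1 else 0))
        = ∑ y ∈ F.image (crmVec D), wt y * (if i ∈ g y R then 1 else 0) := by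
      intro R
      rw [hqdef]; dsimp only
      simp_rw [Finset.sum_mul, ite_mul, zero_mul]
      rw [Finset.sum_comm]
      refine Finset.sum_congr rfl fun y hy => ?_
      simp [Finset.sum_ite_eq]
    rw [Finset.sum_congr rfl fun R _ => by rw [hinner R]]
    simp_rw [Finset.mul_sum]
    rw [Finset.sum_comm, hzi]
    refine Finset.sum_congr rfl fun y hy => ?_
    have hkey : ∑ R : Finset γ, D.p R * (wt y * (if i ∈ g y R then 1 else 0))
        = wt y * crmVec D (g y) i := by
      unfold crmVec
      rw [Finset.mul_sum]
      exact Finset.sum_congr rfl fun R _ => by ring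
    rw [hgv y hy] at hkey
    exact hkey
  rw [hsel]
  have hxi : D.marg i / a = z i + c i := by
    have := congrFun hzc i
    simpa using this.symm
  have hci : c i ≤ 0 := hc i
  have h1 : D.marg i / a ≤ z i := by rw [hxi]; linarith
  have h2 : D.marg i = a * (D.marg i / a) := by field_simp
  rw [h2]
  exact mul_le_mul_of_nonneg_left h1 (le_of_lt ha0)
end

section
/- Let R be an α-uncontentious random set in a matroid, and let R' be obtained from R by independently retaining each element of R with probability p ∈ [0,1]. Then R' is α-uncontentious. -/
open Finset BigOperators
open scoped Classical

variable {γ : Type*} [DecidableEq γ] [Fintype γ]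

section Aux

variable {γ : Type*} [DecidableEq γ] [Fintype γ]

open Finset in
lemma stmt6_sum_mu (p : ℝ) (R : Finset γ) :
    ∑ T ∈ R.powerset, p ^ T.card * (1 - p) ^ (R.card - T.card) = 1 := by
  have key := Finset.prod_add (fun _ : γ => p) (fun _ : γ => 1 - p) R
  simp only [Finset.prod_const] at key
  have h1 : (p + (1 - p)) = 1 := by ring
  rw [h1, one_pow] at key
  calc ∑ T ∈ R.powerset, p ^ T.card * (1 - p) ^ (R.card - T.card)
      = ∑ T ∈ R.powerset, p ^ T.card * (1 - p) ^ (R \ T).card := by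
        apply Finset.sum_congr rfl
        intro T hT
        rw [Finset.card_sdiff_of_subset (Finset.mem_powerset.mp hT)]
    _ = 1 := key.symm

open Finset in
lemma stmt6_sum_mu_mem (p : ℝ) (R : Finset γ) (i : γ) (hi : i ∈ R) :
    ∑ T ∈ R.powerset,
      p ^ T.card * (1 - p) ^ (R.card - T.card) * (if i ∈ T then (1:ℝ) else 0) = p := by
  have key := Finset.prod_add (fun _ : γ => p) (fun j : γ => if j = i then (0:ℝ) else 1 - p) R
  have hL : ∏ j ∈ R, ((fun _ : γ => p) j + (fun j : γ => if j = i then (0:ℝ) else 1 - p) j)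
      = p := by
    rw [← Finset.mul_prod_erase R _ hi]
    have h2 : ∏ j ∈ R.erase i, (p + if j = i then (0:ℝ) else 1 - p) = 1 := by
      apply Finset.prod_eq_one
      intro j hj
      rw [if_neg (Finset.ne_of_mem_erase hj)]
      ring
    simp only [h2]
    simp
  calc ∑ T ∈ R.powerset,
      p ^ T.card * (1 - p) ^ (R.card - T.card) * (if i ∈ T then (1:ℝ) else 0)
      = ∑ t ∈ R.powerset, (∏ _j ∈ t, p) * ∏ j ∈ R \ t, (if j = i then (0:ℝ) else 1 - p) := by
        apply Finset.sum_congr rfl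
        intro T hT
        rw [Finset.prod_const]
        by_cases hiT : i ∈ T
        · rw [if_pos hiT, mul_one]
          have h3 : ∏ j ∈ R \ T, (if j = i then (0:ℝ) else 1 - p) = (1 - p) ^ (R \ T).card := by
            rw [← Finset.prod_const]
            apply Finset.prod_congr rfl
            intro j hj
            rw [if_neg]
            intro hji
            exact (Finset.mem_sdiff.mp hj).2 (hji ▸ hiT)
          rw [h3, Finset.card_sdiff_of_subset (Finset.mem_powerset.mp hT)]
        · rw [if_neg hiT, mul_zero]
          have hiRT : i ∈ R \ T := Finset.mem_sdiff.mpr ⟨hi, hiT⟩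
          rw [Finset.prod_eq_zero hiRT (by simp), mul_zero]
    _ = p := by rw [← key]; exact hL

open Finset in
lemma stmt6_inner_sum (p : ℝ) (R S : Finset γ) (hS : S ⊆ R) (w : γ → ℝ) :
    ∑ T ∈ R.powerset,
      p ^ T.card * (1 - p) ^ (R.card - T.card) * ∑ i ∈ S, (if i ∈ T then w i else 0)
    = p * ∑ i ∈ S, w i := by
  simp only [Finset.mul_sum]
  rw [Finset.sum_comm]
  apply Finset.sum_congr rfl
  intro i hiS
  have h4 : ∀ T ∈ R.powerset,
      p ^ T.card * (1 - p) ^ (R.card - T.card) * (if i ∈ T then w i else 0)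
      = p ^ T.card * (1 - p) ^ (R.card - T.card) * (if i ∈ T then (1:ℝ) else 0) * w i := by
    intro T _
    by_cases hiT : i ∈ T <;> simp [hiT]
  rw [Finset.sum_congr rfl h4, ← Finset.sum_mul, stmt6_sum_mu_mem p R i (hS hiS)]

end Aux

/-- if `R` is `a`-uncontentious and `R'` retains each element of `R`
independently with probability `p`, then `R'` is `a`-uncontentious. -/
theorem stmt6 (M : FinMatroid γ) (D D' : FinDist γ) (p a : ℝ)
    (hp0 : 0 ≤ p) (hp1 : p ≤ 1) (ha : 1 ≤ a)
    (hD' : ∀ T : Finset γ, D'.p T =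
      ∑ R : Finset γ, D.p R *
        (if T ⊆ R then p ^ T.card * (1 - p) ^ (R.card - T.card) else 0))
    (h : UncontentiousW M D a) :
    UncontentiousW M D' a := by
  intro w hw
  set μ : Finset γ → Finset γ → ℝ :=
    fun R T => p ^ T.card * (1 - p) ^ (R.card - T.card) with hμ
  have hμ0 : ∀ R T, 0 ≤ μ R T := fun R T =>
    mul_nonneg (pow_nonneg hp0 _) (pow_nonneg (by linarith) _)
  have hswap : ∀ F : Finset γ → ℝ,
      ∑ T : Finset γ, D'.p T * F T
        = ∑ R : Finset γ, D.p R * ∑ T ∈ R.powerset, μ R T * F T := by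
    intro F
    simp only [hD', Finset.sum_mul]
    rw [Finset.sum_comm]
    apply Finset.sum_congr rfl
    intro R _
    rw [Finset.mul_sum]
    calc ∑ T : Finset γ, D.p R * (if T ⊆ R then μ R T else 0) * F T
        = ∑ T : Finset γ, (if T ⊆ R then D.p R * (μ R T * F T) else 0) := by
          apply Finset.sum_congr rfl
          intro T _
          by_cases hTR : T ⊆ R <;> simp [hTR] <;> ring
      _ = ∑ T ∈ Finset.univ.filter (fun T : Finset γ => T ⊆ R), D.p R * (μ R T * F T) :=
          (Finset.sum_filter _ _).symm
      _ = ∑ T ∈ R.powerset, D.p R * (μ R T * F T) := by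
          apply Finset.sum_congr _ (fun _ _ => rfl)
          ext T
          simp [Finset.mem_powerset]
  have key1 : ∑ T : Finset γ, D'.p T * ∑ i ∈ T, w i
      = p * ∑ R : Finset γ, D.p R * ∑ i ∈ R, w i := by
    rw [hswap, Finset.mul_sum]
    apply Finset.sum_congr rfl
    intro R _
    have hin : ∑ T ∈ R.powerset, μ R T * ∑ i ∈ T, w i = p * ∑ i ∈ R, w i := by
      rw [← stmt6_inner_sum p R R (subset_refl R) w]
      apply Finset.sum_congr rfl
      intro T hT
      congr 1
      rw [Finset.sum_ite_mem, Finset.inter_eq_right.mpr (Finset.mem_powerset.mp hT)]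
    rw [hin]; ring
  have hrank : ∀ R : Finset γ,
      p * M.wrank w R ≤ ∑ T ∈ R.powerset, μ R T * M.wrank w T := by
    intro R
    obtain ⟨S, hSmem, hSval⟩ := Finset.exists_mem_eq_sup'
      (⟨∅, by simp [M.indep_empty]⟩ : (R.powerset.filter fun S => M.Indep S).Nonempty)
      (fun S => ∑ i ∈ S, w i)
    have hSR : S ⊆ R := Finset.mem_powerset.mp (Finset.mem_filter.mp hSmem).1
    have hSind : M.Indep S := (Finset.mem_filter.mp hSmem).2
    have hw1 : M.wrank w R = ∑ i ∈ S, w i := hSval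
    calc p * M.wrank w R
        = ∑ T ∈ R.powerset, μ R T * ∑ i ∈ S, (if i ∈ T then w i else 0) := by
          rw [stmt6_inner_sum p R S hSR w, hw1]
      _ ≤ ∑ T ∈ R.powerset, μ R T * M.wrank w T := by
          apply Finset.sum_le_sum
          intro T hT
          apply mul_le_mul_of_nonneg_left _ (hμ0 R T)
          rw [Finset.sum_ite_mem]
          apply Finset.le_sup' (f := fun S => ∑ i ∈ S, w i)
          exact Finset.mem_filter.mpr ⟨Finset.mem_powerset.mpr Finset.inter_subset_right,
            M.indep_subset hSind Finset.inter_subset_left⟩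
  calc ∑ T : Finset γ, D'.p T * M.wrank w T
      = ∑ R : Finset γ, D.p R * ∑ T ∈ R.powerset, μ R T * M.wrank w T :=
        hswap _
    _ ≥ ∑ R : Finset γ, D.p R * (p * M.wrank w R) :=
        Finset.sum_le_sum fun R _ => mul_le_mul_of_nonneg_left (hrank R) (D.nonneg R)
    _ = p * ∑ R : Finset γ, D.p R * M.wrank w R := by
        rw [Finset.mul_sum]
        exact Finset.sum_congr rfl fun R _ => by ring
    _ ≥ p * ((1 / a) * ∑ R : Finset γ, D.p R * ∑ i ∈ R, w i) :=
        mul_le_mul_of_nonneg_left (h w hw) hp0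
    _ = (1 / a) * ∑ T : Finset γ, D'.p T * ∑ i ∈ T, w i := by
        rw [key1]; ring
end

section
/- If f: 2^E → ℝ₊ is submodular with f(∅) = 0 and monotone, R is a random subset of E, and R' is obtained by retaining each element of R independently with probability p, then E[f(R')] ≥ p·E[f(R)]. -/
open Finset BigOperators
open scoped Classical

variable {γ : Type*} [DecidableEq γ] [Fintype γ]

lemma binom_sum (p : ℝ) (s : Finset γ) :
    ∑ T ∈ s.powerset, p ^ T.card * (1 - p) ^ (s.card - T.card) = 1 := by
  induction s using Finset.induction with
  | empty => simp
  | @insert x s hx ih =>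
    rw [Finset.sum_powerset_insert hx]
    have h1 : ∀ T ∈ s.powerset, p ^ T.card * (1 - p) ^ ((insert x s).card - T.card)
        = (1 - p) * (p ^ T.card * (1 - p) ^ (s.card - T.card)) := by
      intro T hT
      rw [Finset.mem_powerset] at hT
      rw [Finset.card_insert_of_notMem hx, Nat.succ_sub (Finset.card_le_card hT), pow_succ]
      ring
    have h2 : ∀ T ∈ s.powerset, p ^ (insert x T).card *
        (1 - p) ^ ((insert x s).card - (insert x T).card)
        = p * (p ^ T.card * (1 - p) ^ (s.card - T.card)) := by
      intro T hT
      rw [Finset.mem_powerset] at hT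
      have hxT : x ∉ T := fun h => hx (hT h)
      rw [Finset.card_insert_of_notMem hx, Finset.card_insert_of_notMem hxT,
        Nat.succ_sub_succ, pow_succ]
      ring
    rw [Finset.sum_congr rfl h1, Finset.sum_congr rfl h2, ← Finset.mul_sum, ← Finset.mul_sum, ih]
    ring

lemma key_lemma (f : Finset γ → ℝ) (hempty : f ∅ = 0)
    (hmono : ∀ A B : Finset γ, A ⊆ B → f A ≤ f B)
    (hsub : ∀ A B : Finset γ, f (A ∪ B) + f (A ∩ B) ≤ f A + f B)
    (p : ℝ) (hp0 : 0 ≤ p) (hp1 : p ≤ 1) (s : Finset γ) :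
    p * f s ≤ ∑ T ∈ s.powerset, p ^ T.card * (1 - p) ^ (s.card - T.card) * f T := by
  induction s using Finset.induction with
  | empty => simp [hempty]
  | @insert x s hx ih =>
    rw [Finset.sum_powerset_insert hx]
    have h1 : ∀ T ∈ s.powerset, p ^ T.card * (1 - p) ^ ((insert x s).card - T.card) * f T
        = (1 - p) * (p ^ T.card * (1 - p) ^ (s.card - T.card) * f T) := by
      intro T hT
      rw [Finset.mem_powerset] at hT
      rw [Finset.card_insert_of_notMem hx, Nat.succ_sub (Finset.card_le_card hT), pow_succ]
      ring
    have h2 : ∀ T ∈ s.powerset, p ^ (insert x T).card *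
        (1 - p) ^ ((insert x s).card - (insert x T).card) * f (insert x T)
        = p * (p ^ T.card * (1 - p) ^ (s.card - T.card) * f (insert x T)) := by
      intro T hT
      rw [Finset.mem_powerset] at hT
      have hxT : x ∉ T := fun h => hx (hT h)
      rw [Finset.card_insert_of_notMem hx, Finset.card_insert_of_notMem hxT,
        Nat.succ_sub_succ, pow_succ]
      ring
    rw [Finset.sum_congr rfl h1, Finset.sum_congr rfl h2, ← Finset.mul_sum, ← Finset.mul_sum]
    set G := ∑ T ∈ s.powerset, p ^ T.card * (1 - p) ^ (s.card - T.card) * f T with hG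
    set c := f (insert x s) - f s with hc
    have hcnn : 0 ≤ c := sub_nonneg.mpr (hmono _ _ (Finset.subset_insert x s))
    have h3 : G + c ≤ ∑ T ∈ s.powerset, p ^ T.card * (1 - p) ^ (s.card - T.card) * f (insert x T) := by
      have heq : G + c = ∑ T ∈ s.powerset, p ^ T.card * (1 - p) ^ (s.card - T.card) * (f T + c) := by
        simp_rw [mul_add, Finset.sum_add_distrib, ← Finset.sum_mul, binom_sum, hG, one_mul]
      rw [heq]
      apply Finset.sum_le_sum
      intro T hT
      rw [Finset.mem_powerset] at hT
      have hcoef : 0 ≤ p ^ T.card * (1 - p) ^ (s.card - T.card) :=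
        mul_nonneg (pow_nonneg hp0 _) (pow_nonneg (by linarith) _)
      apply mul_le_mul_of_nonneg_left _ hcoef
      have := hsub (insert x T) s
      have hu : insert x T ∪ s = insert x s := by
        rw [Finset.insert_union, Finset.union_eq_right.mpr hT]
      have hi : insert x T ∩ s = T := by
        rw [Finset.insert_inter_of_notMem hx, Finset.inter_eq_left.mpr hT]
      rw [hu, hi] at this
      simp only [hc]
      linarith
    have h4 : p * (G + c) ≤ p * (∑ T ∈ s.powerset, p ^ T.card * (1 - p) ^ (s.card - T.card) * f (insert x T)) :=
      mul_le_mul_of_nonneg_left h3 hp0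
    have hfx : f (insert x s) = f s + c := by simp [hc]
    rw [hfx]
    nlinarith [ih]

/-- for a nonnegative monotone submodular `f` with `f ∅ = 0`, if `R'` retains
each element of the random set `R` independently with probability `p`, then
`E[f(R')] ≥ p · E[f(R)]`. -/
theorem stmt8 (f : Finset γ → ℝ) (hnn : ∀ S, 0 ≤ f S) (hempty : f ∅ = 0)
    (hmono : ∀ A B : Finset γ, A ⊆ B → f A ≤ f B)
    (hsub : ∀ A B : Finset γ, f (A ∪ B) + f (A ∩ B) ≤ f A + f B)
    (p : ℝ) (hp0 : 0 ≤ p) (hp1 : p ≤ 1)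
    (D D' : FinDist γ)
    (hD' : ∀ T : Finset γ, D'.p T =
      ∑ R : Finset γ, D.p R *
        (if T ⊆ R then p ^ T.card * (1 - p) ^ (R.card - T.card) else 0)) :
    ∑ T : Finset γ, D'.p T * f T ≥ p * ∑ R : Finset γ, D.p R * f R := by
  have hrw : ∑ T : Finset γ, D'.p T * f T
      = ∑ R : Finset γ, D.p R * ∑ T ∈ R.powerset,
          p ^ T.card * (1 - p) ^ (R.card - T.card) * f T := by
    simp_rw [hD', Finset.sum_mul]
    rw [Finset.sum_comm]
    refine Finset.sum_congr rfl fun R _ => ?_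
    simp_rw [mul_assoc, ← Finset.mul_sum]
    congr 1
    rw [show (R.powerset : Finset (Finset γ)) = Finset.univ.filter (fun T => T ⊆ R) by
      ext T; simp [Finset.mem_powerset]]
    rw [Finset.sum_filter]
    refine Finset.sum_congr rfl fun T _ => ?_
    split <;> simp [mul_assoc]
  rw [hrw, Finset.mul_sum, ge_iff_le]
  apply Finset.sum_le_sum
  intro R _
  calc p * (D.p R * f R) = D.p R * (p * f R) := by ring
    _ ≤ _ := mul_le_mul_of_nonneg_left (key_lemma f hempty hmono hsub p hp0 hp1 R) (D.nonneg R)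
end

section
/- Let M be a matroid with m pairwise-disjoint bases B_1,...,B_m. Define the random set R with Pr[R = B_1 ∪ ... ∪ B_k] = 2^{-k} for k = 1,...,m-1 and Pr[R = B_1 ∪ ... ∪ B_m] = 2^{1-m}. Then R is 2-uncontentious, as witnessed by the contention resolution map φ(B_1 ∪ ... ∪ B_k) = B_k. -/
open Finset BigOperators
open scoped Classical

variable {γ : Type*} [DecidableEq γ] [Fintype γ]

/-- The union of the first `k` of the given sets. -/
def unionUpTo (B : ℕ → Finset γ) (k : ℕ) : Finset γ := (Finset.range k).biUnion B

/-- Selection map: if `R` is a union of the first `k` sets, output `B (k-1)`. -/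
noncomputable def crmSel (B : ℕ → Finset γ) (m : ℕ) (R : Finset γ) : Finset γ :=
  if h : ∃ k, 1 ≤ k ∧ k ≤ m ∧ R = unionUpTo B k then B (h.choose - 1) else ∅

lemma aux_geom : ∀ n j : ℕ, j ≤ n →
    (∑ k ∈ Finset.Icc (j+1) n, ((2:ℝ)⁻¹)^k) + ((2:ℝ)⁻¹)^n = ((2:ℝ)⁻¹)^j := by
  intro n
  induction n with
  | zero => intro j hj; interval_cases j; simp
  | succ n ih =>
    intro j hj
    rcases eq_or_lt_of_le hj with h | h
    · subst h
      rw [Finset.Icc_eq_empty (by omega)]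
      simp
    · have hj' : j ≤ n := by omega
      rw [Finset.sum_Icc_succ_top (by omega : j+1 ≤ n+1)]
      have h2 := ih j hj'
      have hp : ((2:ℝ)⁻¹)^(n+1) + ((2:ℝ)⁻¹)^(n+1) = ((2:ℝ)⁻¹)^n := by
        rw [pow_succ]; ring
      linarith

/-- for a matroid with `m` pairwise-disjoint bases `B 0, …, B (m-1)` and the
distribution `Pr[R = B 0 ∪ ⋯ ∪ B (k-1)] = 2^{-k}` for `k = 1,…,m-1`,
`Pr[R = B 0 ∪ ⋯ ∪ B (m-1)] = 2^{1-m}`, the contention resolution map sending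
`B 0 ∪ ⋯ ∪ B (k-1)` to `B (k-1)` witnesses that `R` is `2`-uncontentious. -/
theorem stmt10 (M : FinMatroid γ) (m : ℕ) (hm : 1 ≤ m) (B : ℕ → Finset γ)
    (hbase : ∀ i, i < m → M.Indep (B i) ∧ ∀ A : Finset γ, M.Indep A → A.card ≤ (B i).card)
    (hdisj : ∀ i j, i < j → j < m → Disjoint (B i) (B j))
    (D : FinDist γ)
    (hD : ∀ S : Finset γ, D.p S =
      (∑ k ∈ Finset.Icc 1 (m - 1), if S = unionUpTo B k then ((2 : ℝ)⁻¹) ^ k else 0)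
        + (if S = unionUpTo B m then ((2 : ℝ)⁻¹) ^ (m - 1) else 0)) :
    ∃ phi : CRM M, Competitive M D 2 phi ∧
      ∀ k, 1 ≤ k → k ≤ m → phi.q (unionUpTo B k) (B (k - 1)) = 1 := by
  -- all bases have the same cardinality
  have hcard : ∀ i, i < m → (B i).card = (B 0).card := fun i hi =>
    le_antisymm ((hbase 0 hm).2 _ (hbase i hi).1) ((hbase i hi).2 _ (hbase 0 hm).1)
  -- cardinality of prefix unions
  have hucard : ∀ k, k ≤ m → (unionUpTo B k).card = k * (B 0).card := by
    intro k hk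
    rw [unionUpTo, Finset.card_biUnion]
    · rw [Finset.sum_congr rfl (fun i hi => hcard i (by
        simp only [Finset.mem_range] at hi; omega))]
      simp [mul_comm]
    · intro i hi j hj hij
      simp only [Finset.coe_range, Set.mem_Iio, Finset.mem_coe, Finset.mem_range] at hi hj
      rcases lt_or_gt_of_ne hij with h | h
      · exact hdisj i j h (by omega)
      · exact (hdisj j i h (by omega)).symm
  -- key: representations of the same union give the same selected base
  have same_B : ∀ k k', 1 ≤ k → k ≤ m → 1 ≤ k' → k' ≤ m →
      unionUpTo B k = unionUpTo B k' → B (k-1) = B (k'-1) := by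
    intro k k' hk1 hkm hk1' hkm' heq
    have hc : k * (B 0).card = k' * (B 0).card := by
      rw [← hucard k hkm, ← hucard k' hkm', heq]
    rcases Nat.eq_zero_or_pos (B 0).card with hr | hr
    · have h1 : (B (k-1)).card = 0 := by rw [hcard (k-1) (by omega)]; exact hr
      have h2 : (B (k'-1)).card = 0 := by rw [hcard (k'-1) (by omega)]; exact hr
      rw [Finset.card_eq_zero] at h1 h2
      rw [h1, h2]
    · have : k = k' := Nat.eq_of_mul_eq_mul_right hr hc
      rw [this]
  -- the selection map evaluated at a prefix union
  have hf_eq : ∀ k, 1 ≤ k → k ≤ m → crmSel B m (unionUpTo B k) = B (k-1) := by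
    intro k hk1 hkm
    have hex : ∃ k', 1 ≤ k' ∧ k' ≤ m ∧ unionUpTo B k = unionUpTo B k' :=
      ⟨k, hk1, hkm, rfl⟩
    rw [crmSel, dif_pos hex]
    obtain ⟨h1, h2, h3⟩ := hex.choose_spec
    exact same_B _ _ h1 h2 hk1 hkm h3.symm
  -- feasibility of the selection map
  have hf_feas : ∀ R, crmSel B m R ⊆ R ∧ M.Indep (crmSel B m R) := by
    intro R
    rw [crmSel]
    split
    · next h =>
      obtain ⟨h1, h2, h3⟩ := h.choose_spec
      constructor
      · intro x hx
        rw [h3]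
        exact Finset.mem_biUnion.mpr ⟨h.choose - 1, Finset.mem_range.mpr (by omega), hx⟩
      · exact (hbase _ (by omega)).1
    · exact ⟨Finset.empty_subset R, M.indep_empty⟩
  -- the CRM
  refine ⟨⟨fun R S => if S = crmSel B m R then 1 else 0,
      fun R S => by positivity,
      fun R => by simp,
      fun R S hq => by
        have : S = crmSel B m R := by by_contra h; exact hq (if_neg h)
        rw [this]; exact hf_feas R⟩, ?_, ?_⟩
  · -- competitiveness
    intro i
    -- expectation of any functional under D
    have Lsum : ∀ g : Finset γ → ℝ, (∑ R : Finset γ, D.p R * g R) =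
        (∑ k ∈ Finset.Icc 1 (m-1), ((2:ℝ)⁻¹)^k * g (unionUpTo B k))
          + ((2:ℝ)⁻¹)^(m-1) * g (unionUpTo B m) := by
      intro g
      simp_rw [hD, add_mul, Finset.sum_add_distrib, Finset.sum_mul]
      congr 1
      · rw [Finset.sum_comm]
        refine Finset.sum_congr rfl fun k _ => ?_
        simp [ite_mul]
      · simp [ite_mul]
    have hsel : selProb M D
        ⟨fun R S => if S = crmSel B m R then 1 else 0,
          fun R S => by positivity,
          fun R => by simp,
          fun R S hq => by
            have : S = crmSel B m R := by by_contra h; exact hq (if_neg h)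
            rw [this]; exact hf_feas R⟩ i
        = ∑ R : Finset γ, D.p R * (if i ∈ crmSel B m R then 1 else 0) := by
      rw [selProb]
      refine Finset.sum_congr rfl fun R _ => ?_
      congr 1
      rw [Finset.sum_eq_single (crmSel B m R)]
      · show (if crmSel B m R = crmSel B m R then (1:ℝ) else 0) * _ = _
        rw [if_pos rfl, one_mul]
      · intro b _ hb
        show (if b = crmSel B m R then (1:ℝ) else 0) * _ = 0
        rw [if_neg hb, zero_mul]
      · intro h; exact absurd (Finset.mem_univ _) h
    rw [hsel, FinDist.marg, Lsum, Lsum]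
    by_cases hi : ∃ j, j < m ∧ i ∈ B j
    · obtain ⟨j, hj, hij⟩ := hi
      -- membership in prefix unions
      have hiU : ∀ k, k ≤ m → (i ∈ unionUpTo B k ↔ j < k) := by
        intro k hk
        simp only [unionUpTo, Finset.mem_biUnion, Finset.mem_range]
        constructor
        · rintro ⟨l, hl, hil⟩
          by_contra h
          have hlj : l ≠ j := by
            rintro rfl; omega
          rcases lt_or_gt_of_ne hlj with h' | h'
          · exact Finset.disjoint_left.mp (hdisj l j h' hj) hil hij
          · exact Finset.disjoint_left.mp (hdisj j l h' (by omega)) hij hil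
        · intro h; exact ⟨j, h, hij⟩
      have hiB : ∀ k, 1 ≤ k → k ≤ m → (i ∈ B (k-1) ↔ k = j + 1) := by
        intro k hk1 hkm
        constructor
        · intro h
          by_contra hne
          have hlj : k - 1 ≠ j := by omega
          rcases lt_or_gt_of_ne hlj with h' | h'
          · exact Finset.disjoint_left.mp (hdisj (k-1) j h' hj) h hij
          · exact Finset.disjoint_left.mp (hdisj j (k-1) h' (by omega)) hij h
        · intro h
          have : k - 1 = j := by omega
          rw [this]; exact hij
      -- rewrite marginal
      have hmarg : (∑ k ∈ Finset.Icc 1 (m-1),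
            ((2:ℝ)⁻¹)^k * (if i ∈ unionUpTo B k then 1 else 0))
          + ((2:ℝ)⁻¹)^(m-1) * (if i ∈ unionUpTo B m then 1 else 0)
          = (∑ k ∈ Finset.Icc (j+1) (m-1), ((2:ℝ)⁻¹)^k) + ((2:ℝ)⁻¹)^(m-1) := by
      -- indicators
        have h1 : ∀ k ∈ Finset.Icc 1 (m-1),
            ((2:ℝ)⁻¹)^k * (if i ∈ unionUpTo B k then 1 else 0)
              = if j < k then ((2:ℝ)⁻¹)^k else 0 := by
          intro k hk
          simp only [Finset.mem_Icc] at hk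
          simp only [hiU k (by omega)]
          split <;> simp
        rw [Finset.sum_congr rfl h1, Finset.sum_ite, Finset.sum_const_zero, add_zero]
        have hfil : Finset.filter (fun k => j < k) (Finset.Icc 1 (m-1))
            = Finset.Icc (j+1) (m-1) := by
          ext x; simp only [Finset.mem_filter, Finset.mem_Icc]; omega
        rw [hfil, (hiU m le_rfl).mpr hj |> if_pos, mul_one]
      rw [hmarg]
      -- rewrite selection probability
      have hselk : ∀ k ∈ Finset.Icc 1 (m-1),
          ((2:ℝ)⁻¹)^k * (if i ∈ crmSel B m (unionUpTo B k) then 1 else 0)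
            = if k = j + 1 then ((2:ℝ)⁻¹)^k else 0 := by
        intro k hk
        simp only [Finset.mem_Icc] at hk
        rw [hf_eq k hk.1 (by omega)]
        simp only [hiB k hk.1 (by omega)]
        split <;> simp
      rw [Finset.sum_congr rfl hselk, Finset.sum_ite_eq' (Finset.Icc 1 (m-1)),
        hf_eq m hm le_rfl]
      by_cases hjm : j + 1 ≤ m - 1
      · -- j + 1 ≤ m - 1 : equality case
        rw [if_pos (Finset.mem_Icc.mpr ⟨by omega, hjm⟩)]
        rw [if_neg (by rw [hiB m hm le_rfl]; omega), mul_zero, add_zero]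
        rw [aux_geom (m-1) j (by omega)]
        rw [pow_succ]
        ring_nf
        norm_num
      · -- j = m - 1
        have hjeq : j = m - 1 := by omega
        rw [if_neg (by simp only [Finset.mem_Icc]; omega)]
        rw [if_pos (by rw [hiB m hm le_rfl]; omega), mul_one]
        rw [Finset.Icc_eq_empty (by omega), Finset.sum_empty]
        have : (0:ℝ) < ((2:ℝ)⁻¹)^(m-1) := by positivity
        linarith
    · -- i is in no base: marginal is 0 and selection prob nonneg
      push_neg at hi
      have hnU : ∀ k, k ≤ m → i ∉ unionUpTo B k := by
        intro k hk h
        simp only [unionUpTo, Finset.mem_biUnion, Finset.mem_range] at h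
        obtain ⟨l, hl, hil⟩ := h
        exact hi l (by omega) hil
      have hz1 : ∀ k ∈ Finset.Icc 1 (m-1),
          ((2:ℝ)⁻¹)^k * (if i ∈ unionUpTo B k then 1 else 0) = 0 := by
        intro k hk
        simp only [Finset.mem_Icc] at hk
        rw [if_neg (hnU k (by omega)), mul_zero]
      rw [Finset.sum_congr rfl hz1, Finset.sum_const_zero,
        if_neg (hnU m le_rfl), mul_zero, add_zero]
      have hpos : (0:ℝ) ≤ (∑ k ∈ Finset.Icc 1 (m-1),
            ((2:ℝ)⁻¹)^k * (if i ∈ crmSel B m (unionUpTo B k) then 1 else 0))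
          + ((2:ℝ)⁻¹)^(m-1) * (if i ∈ crmSel B m (unionUpTo B m) then 1 else 0) := by
        have : ∀ k ∈ Finset.Icc 1 (m-1), (0:ℝ) ≤
            ((2:ℝ)⁻¹)^k * (if i ∈ crmSel B m (unionUpTo B k) then 1 else 0) := by
          intro k _; positivity
        have h1 := Finset.sum_nonneg this
        have h2 : (0:ℝ) ≤ ((2:ℝ)⁻¹)^(m-1) *
            (if i ∈ crmSel B m (unionUpTo B m) then 1 else 0) := by positivity
        linarith
      linarith
  · -- the map sends unions to the corresponding base
    intro k hk1 hkm
    simp only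
    rw [if_pos (hf_eq k hk1 hkm).symm]
end

section
/- The 1-uniform matroid on n elements does not admit an oblivious β-competitive α-universal contention resolution scheme for any 1 < α ≤ β < n; i.e., there is no single contention resolution map φ that is β-competitive for every α-uncontentious distribution. -/
open Finset BigOperators
open scoped Classical

variable {γ : Type*} [DecidableEq γ] [Fintype γ]

/-- Helper: sums against the adversarial distribution decompose. -/
lemma sum_decomp {n : ℕ} (i0 : Fin n) (e c : ℝ) (g : Finset (Fin n) → ℝ) :
    ∑ R : Finset (Fin n),
      ((if R = Finset.univ then e else 0)
        + ∑ j ∈ Finset.univ.erase i0, (if R = {j} then c else 0)) * g R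
    = e * g Finset.univ + ∑ j ∈ Finset.univ.erase i0, c * g {j} := by
  simp only [add_mul, Finset.sum_add_distrib, ite_mul, zero_mul, Finset.sum_mul]
  congr 1
  · rw [Finset.sum_ite_eq' Finset.univ Finset.univ (fun R => e * g R)]
    simp
  · rw [Finset.sum_comm]
    apply Finset.sum_congr rfl
    intro j _
    rw [Finset.sum_ite_eq' Finset.univ ({j} : Finset (Fin n)) (fun R => c * g R)]
    simp

/-- the 1-uniform matroid on `n` elements admits no oblivious `b`-competitive
`a`-universal CRS for `1 < a ≤ b < n`: every single contention resolution map `phi` fails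
to be `b`-competitive for some `a`-uncontentious distribution. -/
theorem stmt11 (n : ℕ) (M : FinMatroid (Fin n))
    (hM : ∀ S : Finset (Fin n), M.Indep S ↔ S.card ≤ 1)
    (a b : ℝ) (ha : 1 < a) (hab : a ≤ b) (hb : b < n) :
    ∀ phi : CRM M, ∃ D : FinDist (Fin n),
      Uncontentious M D a ∧ ¬ Competitive M D b phi := by
  intro phi
  have hb0 : (1:ℝ) < b := lt_of_lt_of_le ha hab
  have hnR1 : (1:ℝ) < (n:ℝ) := lt_trans hb0 hb
  have hn2 : 2 ≤ n := by
    have h1 : 1 < n := by exact_mod_cast hnR1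
    omega
  have hn2R : (2:ℝ) ≤ (n:ℝ) := by exact_mod_cast hn2
  have hn0 : (0:ℝ) < (n:ℝ) := by linarith
  -- selection probabilities of phi on the full set
  set x : Fin n → ℝ := fun i =>
    ∑ S : Finset (Fin n), phi.q Finset.univ S * (if i ∈ S then 1 else 0) with hxdef
  have hx0 : ∀ i, 0 ≤ x i := by
    intro i
    apply Finset.sum_nonneg
    intro S _
    have := phi.nonneg Finset.univ S
    split_ifs <;> nlinarith
  have hxsum : ∑ i : Fin n, x i ≤ 1 := by
    have h1 : ∑ i : Fin n, x i
        = ∑ S : Finset (Fin n), phi.q Finset.univ S * (S.card : ℝ) := by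
      rw [hxdef, Finset.sum_comm]
      apply Finset.sum_congr rfl
      intro S _
      rw [← Finset.mul_sum]
      congr 1
      simp
    rw [h1, ← phi.sum_one Finset.univ]
    apply Finset.sum_le_sum
    intro S _
    rcases eq_or_ne (phi.q Finset.univ S) 0 with h | h
    · simp [h]
    · have hS := ((hM S).mp (phi.feasible Finset.univ S h).2)
      have hSc : (S.card : ℝ) ≤ 1 := by exact_mod_cast hS
      have := phi.nonneg Finset.univ S
      nlinarith
  obtain ⟨i0, -, hi0⟩ : ∃ i ∈ Finset.univ, x i ≤ 1 / (n:ℝ) := by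
    by_contra h
    push_neg at h
    haveI : Nonempty (Fin n) := ⟨⟨0, by omega⟩⟩
    have hlt : ∑ _i : Fin n, (1 / (n:ℝ)) < ∑ i : Fin n, x i := by
      apply Finset.sum_lt_sum_of_nonempty
      · exact Finset.univ_nonempty
      · intro i _; exact h i (Finset.mem_univ i)
    rw [Finset.sum_const, Finset.card_univ, Fintype.card_fin, nsmul_eq_mul,
      mul_one_div, div_self (ne_of_gt hn0)] at hlt
    linarith
  set ε : ℝ := (a - 1) / ((n:ℝ) - 2 + a) with hεdef
  set c : ℝ := (1 - ε) / ((n:ℝ) - 1) with hcdef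
  have hden : (0:ℝ) < (n:ℝ) - 2 + a := by linarith
  have hn1 : (0:ℝ) < (n:ℝ) - 1 := by linarith
  have hε0 : 0 < ε := div_pos (by linarith) hden
  have hε1 : ε < 1 := by rw [hεdef, div_lt_one hden]; linarith
  have hc0 : 0 ≤ c := div_nonneg (by linarith) hn1.le
  have key : ε + c = a * c := by
    rw [hcdef, hεdef]
    field_simp
    ring
  have hcardR : ((Finset.univ.erase i0).card : ℝ) = (n:ℝ) - 1 := by
    rw [Finset.card_erase_of_mem (Finset.mem_univ i0), Finset.card_univ, Fintype.card_fin]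
    have h1 : (1:ℕ) ≤ n := by omega
    push_cast [h1]
    ring
  -- the adversarial distribution
  set D : FinDist (Fin n) :=
    { p := fun R => (if R = Finset.univ then ε else 0)
        + ∑ j ∈ Finset.univ.erase i0, (if R = {j} then c else 0)
      nonneg := by
        intro R
        apply add_nonneg
        · split_ifs <;> simp [hε0.le]
        · apply Finset.sum_nonneg; intro j _; split_ifs <;> simp [hc0]
      sum_one := by
        have := sum_decomp i0 ε c (fun _ => (1:ℝ))
        simp only [mul_one] at this
        rw [show (∑ R : Finset (Fin n),
            ((if R = Finset.univ then ε else 0)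
              + ∑ j ∈ Finset.univ.erase i0, (if R = {j} then c else 0)))
            = ∑ R : Finset (Fin n),
            ((if R = Finset.univ then ε else 0)
              + ∑ j ∈ Finset.univ.erase i0, (if R = {j} then c else 0)) * 1 by simp]
        rw [sum_decomp i0 ε c (fun _ => (1:ℝ))]
        rw [Finset.sum_const, nsmul_eq_mul, hcardR, hcdef]
        field_simp
        ring } with hDdef
  -- marginals under D
  have hmarg : ∀ i : Fin n,
      D.marg i = ε + (if i ∈ Finset.univ.erase i0 then c else 0) := by
    intro i
    rw [FinDist.marg]
    rw [show (∑ R : Finset (Fin n), D.p R * (if i ∈ R then 1 else 0))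
        = ε * (if i ∈ (Finset.univ : Finset (Fin n)) then 1 else 0)
          + ∑ j ∈ Finset.univ.erase i0,
              c * (if i ∈ ({j} : Finset (Fin n)) then 1 else 0) from
      sum_decomp i0 ε c (fun R => if i ∈ R then 1 else 0)]
    simp only [Finset.mem_univ, if_true, mul_one, Finset.mem_singleton]
    congr 1
    have hcongr : ∑ j ∈ Finset.univ.erase i0, c * (if i = j then 1 else 0)
        = ∑ j ∈ Finset.univ.erase i0, (if i = j then c else 0) :=
      Finset.sum_congr rfl (fun j _ => by rw [mul_ite, mul_one, mul_zero])
    rw [hcongr, Finset.sum_ite_eq (Finset.univ.erase i0) i (fun _ => c)]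
  refine ⟨D, ?_, ?_⟩
  · -- Uncontentious via a deterministic CRM
    set f : Finset (Fin n) → Finset (Fin n) := fun R =>
      if R = Finset.univ then {i0} else if R.card ≤ 1 then R else ∅ with hfdef
    have hfeas : ∀ R, f R ⊆ R ∧ M.Indep (f R) := by
      intro R
      simp only [hfdef]
      split_ifs with h1 h2
      · subst h1
        exact ⟨Finset.subset_univ _, (hM _).mpr (by simp)⟩
      · exact ⟨Finset.Subset.refl R, (hM _).mpr h2⟩
      · exact ⟨Finset.empty_subset R, M.indep_empty⟩
    set ψ : CRM M :=
      { q := fun R S => if S = f R then 1 else 0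
        nonneg := by
          intro R S
          show (0:ℝ) ≤ if S = f R then 1 else 0
          split_ifs <;> norm_num
        sum_one := by intro R; simp
        feasible := by
          intro R S h
          have hS : S = f R := by by_contra h'; simp [h'] at h
          rw [hS]; exact hfeas R } with hψdef
    have hinner : ∀ R (i : Fin n),
        (∑ S : Finset (Fin n), ψ.q R S * (if i ∈ S then 1 else 0))
        = (if i ∈ f R then 1 else 0) := by
      intro R i
      rw [hψdef]
      simp only [ite_mul, one_mul, zero_mul]
      rw [Finset.sum_ite_eq' Finset.univ (f R) (fun S => if i ∈ S then (1:ℝ) else 0)]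
      simp
    have hfj : ∀ j ∈ Finset.univ.erase i0, f ({j} : Finset (Fin n)) = {j} := by
      intro j _
      simp only [hfdef]
      have hne : ({j} : Finset (Fin n)) ≠ Finset.univ := by
        intro h
        have := congrArg Finset.card h
        rw [Finset.card_singleton, Finset.card_univ, Fintype.card_fin] at this
        omega
      simp [hne]
    have hfu : f Finset.univ = {i0} := by simp [hfdef]
    have hsel : ∀ i : Fin n, selProb M D ψ i =
        ε * (if i ∈ ({i0} : Finset (Fin n)) then 1 else 0)
          + (if i ∈ Finset.univ.erase i0 then c else 0) := by
      intro i
      rw [selProb]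
      rw [show (∑ R : Finset (Fin n), D.p R *
            ∑ S : Finset (Fin n), ψ.q R S * (if i ∈ S then 1 else 0))
          = ∑ R : Finset (Fin n), D.p R * (if i ∈ f R then 1 else 0) from
        Finset.sum_congr rfl (fun R _ => by rw [hinner])]
      rw [show (∑ R : Finset (Fin n), D.p R * (if i ∈ f R then 1 else 0))
          = ε * (if i ∈ f Finset.univ then 1 else 0)
            + ∑ j ∈ Finset.univ.erase i0,
                c * (if i ∈ f ({j} : Finset (Fin n)) then 1 else 0) from
        sum_decomp i0 ε c (fun R => if i ∈ f R then 1 else 0)]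
      rw [hfu]
      congr 1
      have hcongr : ∑ j ∈ Finset.univ.erase i0,
            c * (if i ∈ f ({j} : Finset (Fin n)) then 1 else 0)
          = ∑ j ∈ Finset.univ.erase i0, (if i = j then c else 0) :=
        Finset.sum_congr rfl (fun j hj => by
          rw [hfj j hj]
          by_cases hij : i = j <;> simp [hij])
      rw [hcongr, Finset.sum_ite_eq (Finset.univ.erase i0) i (fun _ => c)]
    refine ⟨ψ, ?_⟩
    intro i
    rw [hmarg i, hsel i]
    by_cases hii : i = i0
    · subst hii
      simp only [Finset.mem_singleton_self, if_true, mul_one, Finset.mem_erase,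
        ne_eq, not_true_eq_false, false_and, if_false, add_zero]
      nlinarith
    · have h1 : i ∈ Finset.univ.erase i0 := Finset.mem_erase.mpr ⟨hii, Finset.mem_univ i⟩
      have h2 : i ∉ ({i0} : Finset (Fin n)) := by simp [hii]
      simp only [if_pos h1, if_neg h2, mul_zero, zero_add, add_zero]
      linarith [key]
  · -- phi fails to be b-competitive at i0
    intro hcomp
    have h := hcomp i0
    have hm : D.marg i0 = ε := by
      rw [hmarg i0]
      simp
    have hs : selProb M D phi i0 = ε * x i0 := by
      rw [selProb]
      rw [show (∑ R : Finset (Fin n), D.p R *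
            ∑ S : Finset (Fin n), phi.q R S * (if i0 ∈ S then 1 else 0))
          = ε * (∑ S : Finset (Fin n), phi.q Finset.univ S * (if i0 ∈ S then 1 else 0))
            + ∑ j ∈ Finset.univ.erase i0,
                c * (∑ S : Finset (Fin n),
                  phi.q ({j} : Finset (Fin n)) S * (if i0 ∈ S then 1 else 0)) from
        sum_decomp i0 ε c
          (fun R => ∑ S : Finset (Fin n), phi.q R S * (if i0 ∈ S then 1 else 0))]
      have hz : ∀ j ∈ Finset.univ.erase i0,
          c * (∑ S : Finset (Fin n),
            phi.q ({j} : Finset (Fin n)) S * (if i0 ∈ S then 1 else 0)) = 0 := by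
        intro j hj
        have hji : j ≠ i0 := (Finset.mem_erase.mp hj).1
        have : (∑ S : Finset (Fin n),
            phi.q ({j} : Finset (Fin n)) S * (if i0 ∈ S then 1 else 0)) = 0 := by
          apply Finset.sum_eq_zero
          intro S _
          rcases eq_or_ne (phi.q ({j} : Finset (Fin n)) S) 0 with h0 | h0
          · rw [h0, zero_mul]
          · have hsub := (phi.feasible _ S h0).1
            have hni : i0 ∉ S := by
              intro hmem
              have := hsub hmem
              rw [Finset.mem_singleton] at this
              exact hji this.symm
            rw [if_neg hni, mul_zero]
        rw [this, mul_zero]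
      rw [Finset.sum_congr rfl hz, Finset.sum_const_zero, add_zero, hxdef]
    rw [hm, hs] at h
    have hbx : b * x i0 < 1 := by
      have h1 : b * x i0 ≤ b * (1 / (n:ℝ)) :=
        mul_le_mul_of_nonneg_left hi0 (by linarith)
      have h2 : b * (1 / (n:ℝ)) < 1 := by
        rw [mul_one_div, div_lt_one hn0]
        exact hb
      linarith
    nlinarith [hx0 i0]
end

section
/- Fix a weighted matroid (M, w) and p ∈ (0,1), and let R be the random set of improving elements with parameter p. Then every element of the maximum-weight basis OPT_w(E) is in R with probability exactly 1 − p, and hence E[rank_w(R)] ≥ (1 − p)·rank_w(M). -/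
open Finset BigOperators
open scoped Classical

variable {γ : Type*} [DecidableEq γ] [Fintype γ]

/-- Probability of sampling `S` when each of the `n` ground elements is included
independently with probability `p`. -/
noncomputable def prodP (p : ℝ) (S : Finset γ) : ℝ :=
  p ^ S.card * (1 - p) ^ (Fintype.card γ - S.card)

/-- The maximum-weight independent subset of `A` (for distinct positive weights, via the
greedy characterization: `i ∈ OPT_w(A)` iff `w i > 0` and `i` is not spanned by the
higher-weight elements of `A`), excluding zero-weight elements. -/
noncomputable def FinMatroid.OPT (M : FinMatroid γ) (w : γ → ℝ) (A : Finset γ) : Finset γ :=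
  A.filter fun i => 0 < w i ∧
    M.rank (A.filter fun j => w i < w j) < M.rank (insert i (A.filter fun j => w i < w j))

/-- The set of improving elements given the sample `S`: elements outside `S` that
belong to `OPT_w(S ∪ {i})`. -/
noncomputable def FinMatroid.Improving (M : FinMatroid γ) (w : γ → ℝ) (S : Finset γ) : Finset γ :=
  Finset.univ.filter fun i => i ∉ S ∧ i ∈ M.OPT w (insert i S)

lemma FinMatroid.card_le_rank (M : FinMatroid γ) {A C : Finset γ} (hC : M.Indep C) (hCA : C ⊆ A) :
    C.card ≤ M.rank A :=
  Finset.le_sup (by simp [Finset.mem_filter, Finset.mem_powerset, hC, hCA])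

lemma FinMatroid.exists_rank (M : FinMatroid γ) (A : Finset γ) :
    ∃ C, C ⊆ A ∧ M.Indep C ∧ C.card = M.rank A := by
  obtain ⟨C, hC, hc⟩ := Finset.exists_mem_eq_sup
    (A.powerset.filter fun S => M.Indep S) ⟨∅, by simp [M.indep_empty]⟩ Finset.card
  simp only [Finset.mem_filter, Finset.mem_powerset] at hC
  exact ⟨C, hC.1, hC.2, hc.symm⟩

lemma FinMatroid.rank_mono (M : FinMatroid γ) {A B : Finset γ} (h : A ⊆ B) : M.rank A ≤ M.rank B := by
  obtain ⟨C, hsub, hind, hcard⟩ := M.exists_rank A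
  exact hcard ▸ M.card_le_rank hind (hsub.trans h)

lemma FinMatroid.exists_extend (M : FinMatroid γ) :
    ∀ (n : ℕ) {A B' : Finset γ}, M.Indep B' → B' ⊆ A → M.rank A - B'.card ≤ n →
    ∃ B, B' ⊆ B ∧ B ⊆ A ∧ M.Indep B ∧ B.card = M.rank A := by
  intro n
  induction n with
  | zero =>
    intro A B' hB' hsub h0
    have h1 := M.card_le_rank hB' hsub
    exact ⟨B', Finset.Subset.refl _, hsub, hB', by omega⟩
  | succ n ih =>
    intro A B' hB' hsub hn
    by_cases hc : B'.card = M.rank A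
    · exact ⟨B', Finset.Subset.refl _, hsub, hB', hc⟩
    have hlt : B'.card < M.rank A := lt_of_le_of_ne (M.card_le_rank hB' hsub) hc
    obtain ⟨C, hCsub, hCind, hCcard⟩ := M.exists_rank A
    obtain ⟨x, hxC, hxB, hxi⟩ := M.indep_exchange hB' hCind (by omega)
    obtain ⟨B, h1, h2, h3, h4⟩ := ih hxi (Finset.insert_subset (hCsub hxC) hsub)
      (by rw [Finset.card_insert_of_notMem hxB]; omega)
    exact ⟨B, (Finset.subset_insert _ _).trans h1, h2, h3, h4⟩

lemma FinMatroid.rank_insert_eq_of_subset (M : FinMatroid γ) {i : γ} {T' T : Finset γ} (hsub : T' ⊆ T)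
    (h : M.rank (insert i T') = M.rank T') : M.rank (insert i T) = M.rank T := by
  by_cases hiT : i ∈ T
  · rw [Finset.insert_eq_self.2 hiT]
  have hiT' : i ∉ T' := fun h' => hiT (hsub h')
  refine le_antisymm ?_ (M.rank_mono (Finset.subset_insert _ _))
  obtain ⟨B', hB'sub, hB'i, hB'card⟩ := M.exists_rank T'
  obtain ⟨B, hBB', hBT, hBi, hBcard⟩ := M.exists_extend (M.rank T) hB'i (hB'sub.trans hsub)
    (Nat.sub_le _ _)
  by_contra hlt
  push_neg at hlt
  obtain ⟨C, hCsub, hCi, hCcard⟩ := M.exists_rank (insert i T)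
  obtain ⟨x, hxC, hxB, hxi⟩ := M.indep_exchange hBi hCi (by omega)
  rcases Finset.mem_insert.1 (hCsub hxC) with rfl | hxT
  · have h1 : M.Indep (insert x B') :=
      M.indep_subset hxi (Finset.insert_subset_insert _ hBB')
    have h2 := M.card_le_rank h1 (Finset.insert_subset_insert _ hB'sub)
    rw [Finset.card_insert_of_notMem (fun hh => hiT' (hB'sub hh)), h] at h2
    omega
  · have h2 := M.card_le_rank hxi (Finset.insert_subset hxT hBT)
    rw [Finset.card_insert_of_notMem hxB] at h2
    omega

lemma FinMatroid.sum_le_wrank (M : FinMatroid γ) (w : γ → ℝ) {A C : Finset γ} (hC : M.Indep C)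
    (hCA : C ⊆ A) : ∑ i ∈ C, w i ≤ M.wrank w A :=
  Finset.le_sup' (fun S => ∑ i ∈ S, w i)
    (Finset.mem_filter.2 ⟨Finset.mem_powerset.2 hCA, hC⟩)

lemma FinMatroid.exists_wrank (M : FinMatroid γ) (w : γ → ℝ) (A : Finset γ) :
    ∃ B, B ⊆ A ∧ M.Indep B ∧ ∑ i ∈ B, w i = M.wrank w A := by
  obtain ⟨B, hB, hb⟩ := Finset.exists_mem_eq_sup'
    (⟨∅, by simp [M.indep_empty]⟩ : ((A.powerset.filter fun S => M.Indep S)).Nonempty)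
    (fun S => ∑ i ∈ S, w i)
  simp only [Finset.mem_filter, Finset.mem_powerset] at hB
  exact ⟨B, hB.1, hB.2, hb.symm⟩

lemma improving_iff (M : FinMatroid γ) (w : γ → ℝ) {i : γ} (hi : i ∈ M.OPT w Finset.univ)
    (S : Finset γ) : i ∈ M.Improving w S ↔ i ∉ S := by
  simp only [FinMatroid.OPT, Finset.mem_filter, Finset.mem_univ, true_and] at hi
  obtain ⟨hwi, hrk⟩ := hi
  constructor
  · intro h
    exact ((Finset.mem_filter.1 h).2).1
  · intro hiS
    have hfil : (insert i S).filter (fun j => w i < w j) = S.filter (fun j => w i < w j) := by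
      rw [Finset.filter_insert, if_neg (lt_irrefl _)]
    have hsub : S.filter (fun j => w i < w j) ⊆ Finset.univ.filter (fun j => w i < w j) :=
      Finset.filter_subset_filter _ (Finset.subset_univ S)
    have hlt : M.rank (S.filter fun j => w i < w j) <
        M.rank (insert i (S.filter fun j => w i < w j)) := by
      rcases lt_or_eq_of_le (M.rank_mono (Finset.subset_insert i (S.filter fun j => w i < w j)))
        with h | h
      · exact h
      · exact absurd (M.rank_insert_eq_of_subset hsub h.symm) (by omega)
    refine Finset.mem_filter.2 ⟨Finset.mem_univ _, hiS, ?_⟩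
    refine Finset.mem_filter.2 ⟨Finset.mem_insert_self _ _, hwi, ?_⟩
    rw [hfil]
    exact hlt

lemma sum_pow_powerset (p : ℝ) (A : Finset γ) :
    ∑ S ∈ A.powerset, p ^ S.card * (1 - p) ^ (A.card - S.card) = 1 := by
  have h := Finset.prod_add (fun _ : γ => p) (fun _ : γ => 1 - p) A
  simp only [add_sub_cancel, Finset.prod_const, one_pow] at h
  have h2 : ∑ S ∈ A.powerset, p ^ S.card * (1 - p) ^ (A.card - S.card) =
      ∑ S ∈ A.powerset, p ^ S.card * (1 - p) ^ (A \ S).card := by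
    refine Finset.sum_congr rfl fun S hS => ?_
    rw [Finset.mem_powerset] at hS
    rw [Finset.card_sdiff_of_subset hS]
  rw [h2, ← h]

lemma sum_prodP (p : ℝ) : ∑ S : Finset γ, prodP p S = 1 := by
  have := sum_pow_powerset p (Finset.univ : Finset γ)
  rw [Finset.powerset_univ] at this
  simpa [prodP, Finset.card_univ] using this

lemma sum_prodP_mem (p : ℝ) (i : γ) :
    ∑ S : Finset γ, prodP p S * (if i ∈ S then (1:ℝ) else 0) = p := by
  have hu : (Finset.univ : Finset (Finset γ)) = (insert i (Finset.univ.erase i)).powerset := by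
    rw [Finset.insert_erase (Finset.mem_univ i), Finset.powerset_univ]
  rw [hu, Finset.sum_powerset_insert (Finset.notMem_erase i _)]
  have h1 : ∀ S ∈ (Finset.univ.erase i).powerset,
      prodP p S * (if i ∈ S then (1:ℝ) else 0) = 0 := by
    intro S hS
    rw [Finset.mem_powerset] at hS
    have : i ∉ S := fun h => Finset.notMem_erase i _ (hS h)
    simp [this]
  rw [Finset.sum_congr rfl h1, Finset.sum_const_zero, zero_add]
  have hcard : (Finset.univ.erase i).card = Fintype.card γ - 1 := by
    rw [Finset.card_erase_of_mem (Finset.mem_univ i), Finset.card_univ]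
  have hn : 1 ≤ Fintype.card γ := Fintype.card_pos_iff.2 ⟨i⟩
  have h2 : ∀ S ∈ (Finset.univ.erase i).powerset,
      prodP p (insert i S) * (if i ∈ insert i S then (1:ℝ) else 0) =
        p * (p ^ S.card * (1 - p) ^ ((Finset.univ.erase i).card - S.card)) := by
    intro S hS
    rw [Finset.mem_powerset] at hS
    have hiS : i ∉ S := fun h => Finset.notMem_erase i _ (hS h)
    have hScard : S.card ≤ Fintype.card γ - 1 := hcard ▸ Finset.card_le_card hS
    simp only [Finset.mem_insert, true_or, if_pos, mul_one, prodP,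
      Finset.card_insert_of_notMem hiS, hcard]
    have : Fintype.card γ - (S.card + 1) = Fintype.card γ - 1 - S.card := by omega
    rw [this]; ring
  rw [Finset.sum_congr rfl h2, ← Finset.mul_sum, sum_pow_powerset, mul_one]

lemma mem_OPT_of_max (M : FinMatroid γ) (w : γ → ℝ) {B : Finset γ} (hBi : M.Indep B)
    (hmax : ∀ C : Finset γ, M.Indep C → ∑ j ∈ C, w j ≤ ∑ j ∈ B, w j)
    {i : γ} (hiB : i ∈ B) (hwi : 0 < w i) : i ∈ M.OPT w Finset.univ := by
  set T := Finset.univ.filter (fun j => w i < w j) with hT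
  have hiT : i ∉ T := by simp [hT]
  simp only [FinMatroid.OPT, Finset.mem_filter, Finset.mem_univ, true_and]
  refine ⟨hwi, ?_⟩
  rcases lt_or_eq_of_le (M.rank_mono (Finset.subset_insert i T)) with h | h
  · exact h
  exfalso
  set B' := B.erase i with hB'
  have hB'i : M.Indep B' := M.indep_subset hBi (Finset.erase_subset _ _)
  have hiB' : i ∉ B' := Finset.notMem_erase i B
  have hspan : M.rank (insert i (T ∪ B')) = M.rank (T ∪ B') :=
    M.rank_insert_eq_of_subset (fun x hx => Finset.mem_union_left _ hx) h.symm
  have hBsub : B ⊆ insert i (T ∪ B') := by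
    intro j hj
    rcases eq_or_ne j i with rfl | hne
    · exact Finset.mem_insert_self _ _
    · exact Finset.mem_insert_of_mem (Finset.mem_union_right _ (Finset.mem_erase.2 ⟨hne, hj⟩))
  have hBrank : B.card ≤ M.rank (T ∪ B') := by
    rw [← hspan]; exact M.card_le_rank hBi hBsub
  have hB'card : B'.card < B.card := Finset.card_erase_lt_of_mem hiB
  obtain ⟨C, hCsub, hCi, hCcard⟩ := M.exists_rank (T ∪ B')
  obtain ⟨x, hxC, hxB', hxi⟩ := M.indep_exchange hB'i hCi (by omega)
  have hxT : x ∈ T := by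
    rcases Finset.mem_union.1 (hCsub hxC) with h' | h'
    · exact h'
    · exact absurd h' hxB'
  have hwx : w i < w x := (Finset.mem_filter.1 hxT).2
  have hsum : ∑ j ∈ insert x B', w j > ∑ j ∈ B, w j := by
    rw [Finset.sum_insert hxB', ← Finset.add_sum_erase _ _ hiB, ← hB']
    linarith
  exact absurd (hmax _ hxi) (not_le.2 hsum)

/-- each element of the max-weight basis is improving with probability
exactly `1 - p`, hence `E[rank_w(R)] ≥ (1-p) · rank_w(M)`. -/
theorem stmt12 (M : FinMatroid γ) (w : γ → ℝ) (hw : ∀ i, 0 ≤ w i)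
    (hinj : Function.Injective w) (p : ℝ) (hp0 : 0 < p) (hp1 : p < 1) :
    (∀ i ∈ M.OPT w Finset.univ,
      ∑ S : Finset γ, prodP p S * (if i ∈ M.Improving w S then (1 : ℝ) else 0) = 1 - p) ∧
    ∑ S : Finset γ, prodP p S * M.wrank w (M.Improving w S) ≥
      (1 - p) * M.wrank w Finset.univ := by
  have hqnn : ∀ S : Finset γ, 0 ≤ prodP p S := fun S =>
    mul_nonneg (pow_nonneg hp0.le _) (pow_nonneg (by linarith) _)
  have part1 : ∀ i ∈ M.OPT w Finset.univ,
      ∑ S : Finset γ, prodP p S * (if i ∈ M.Improving w S then (1 : ℝ) else 0) = 1 - p := by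
    intro i hi
    have key : ∀ S : Finset γ, prodP p S * (if i ∈ M.Improving w S then (1:ℝ) else 0) =
        prodP p S - prodP p S * (if i ∈ S then (1:ℝ) else 0) := by
      intro S
      by_cases h : i ∈ S
      · have : i ∉ M.Improving w S := fun hmem => (improving_iff M w hi S).1 hmem h
        simp [h, this]
      · have : i ∈ M.Improving w S := (improving_iff M w hi S).2 h
        simp [h, this]
    rw [Finset.sum_congr rfl (fun S _ => key S), Finset.sum_sub_distrib, sum_prodP,
      sum_prodP_mem]
  refine ⟨part1, ?_⟩
  obtain ⟨B, hBsub, hBi, hBsum⟩ := M.exists_wrank w Finset.univ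
  have hmax : ∀ C : Finset γ, M.Indep C → ∑ j ∈ C, w j ≤ ∑ j ∈ B, w j := by
    intro C hC
    rw [hBsum]
    exact M.sum_le_wrank w hC (Finset.subset_univ C)
  -- step B: lower-bound each wrank by the weight of B ∩ Improving S
  have stepB : ∀ S : Finset γ, ∑ j ∈ B, (if j ∈ M.Improving w S then w j else 0) ≤
      M.wrank w (M.Improving w S) := by
    intro S
    rw [← Finset.sum_filter]
    exact M.sum_le_wrank w (M.indep_subset hBi (Finset.filter_subset _ _))
      (fun j hj => (Finset.mem_filter.1 hj).2)
  have step1 : ∑ S : Finset γ, prodP p S * M.wrank w (M.Improving w S) ≥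
      ∑ S : Finset γ, prodP p S * ∑ j ∈ B, (if j ∈ M.Improving w S then w j else 0) :=
    Finset.sum_le_sum fun S _ => mul_le_mul_of_nonneg_left (stepB S) (hqnn S)
  refine le_trans ?_ step1
  have swap : ∑ S : Finset γ, prodP p S * ∑ j ∈ B, (if j ∈ M.Improving w S then w j else 0)
      = ∑ j ∈ B, ∑ S : Finset γ, prodP p S * (if j ∈ M.Improving w S then w j else 0) := by
    simp_rw [Finset.mul_sum]
    exact Finset.sum_comm
  have inner : ∀ j, ∑ S : Finset γ, prodP p S * (if j ∈ M.Improving w S then w j else 0)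
      = w j * ∑ S : Finset γ, prodP p S * (if j ∈ M.Improving w S then (1:ℝ) else 0) := by
    intro j
    rw [Finset.mul_sum]
    refine Finset.sum_congr rfl fun S _ => ?_
    by_cases h : j ∈ M.Improving w S <;> simp [h] <;> ring
  rw [swap, ← hBsum, Finset.mul_sum]
  refine Finset.sum_le_sum fun j hj => ?_
  rw [inner j]
  rcases eq_or_lt_of_le (hw j) with h0 | h0
  · simp [← h0]
  · rw [part1 j (mem_OPT_of_max M w hBi hmax hj h0), mul_comm]
end

section
/- Let M be a matroid with distinct weights w, and let S, F be subsets of the ground set. Then |F ∩ OPT_w(S ∪ F)| ≥ |F ∩ OPT_w(S)|. -/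
open Finset BigOperators
open scoped Classical

variable {γ : Type*} [DecidableEq γ] [Fintype γ]

namespace FinMatroid

variable (M : FinMatroid γ)

lemma indep_card_le_rank {I A : Finset γ} (hI : M.Indep I) (hIA : I ⊆ A) :
    I.card ≤ M.rank A :=
  Finset.le_sup (by simp [Finset.mem_filter, Finset.mem_powerset, hI, hIA])

lemma rank_le_card (A : Finset γ) : M.rank A ≤ A.card := by
  apply Finset.sup_le
  intro S hS
  simp only [mem_filter, mem_powerset] at hS
  exact Finset.card_le_card hS.1

lemma rank_mono_s14 {A B : Finset γ} (h : A ⊆ B) : M.rank A ≤ M.rank B := by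
  apply Finset.sup_le
  intro S hS
  simp only [mem_filter, mem_powerset] at hS
  exact M.indep_card_le_rank hS.2 (hS.1.trans h)

lemma exists_basis (A : Finset γ) : ∃ K ⊆ A, M.Indep K ∧ K.card = M.rank A := by
  obtain ⟨K, hK, hEq⟩ := Finset.exists_mem_eq_sup (A.powerset.filter fun S => M.Indep S)
    ⟨∅, by simp [M.indep_empty]⟩ Finset.card
  simp only [mem_filter, mem_powerset] at hK
  exact ⟨K, hK.1, hK.2, hEq.symm⟩

lemma rank_indep {I : Finset γ} (hI : M.Indep I) : M.rank I = I.card :=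
  le_antisymm (M.rank_le_card I) (M.indep_card_le_rank hI (subset_refl I))

lemma rank_lt_card {I : Finset γ} (hI : ¬ M.Indep I) : M.rank I < I.card := by
  rcases lt_or_eq_of_le (M.rank_le_card I) with h | h
  · exact h
  · exfalso
    obtain ⟨K, hKI, hK, hcard⟩ := M.exists_basis I
    rw [h] at hcard
    have : K = I := Finset.eq_of_subset_of_card_le hKI (le_of_eq hcard.symm)
    exact hI (this ▸ hK)

/-- `a` is spanned by `X`. -/
def Spans (X : Finset γ) (a : γ) : Prop := M.rank (insert a X) = M.rank X

lemma not_spans_iff {X : Finset γ} {a : γ} :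
    ¬ M.Spans X a ↔ M.rank X < M.rank (insert a X) := by
  unfold Spans
  have := M.rank_mono_s14 (subset_insert a X)
  omega

lemma exists_basis_superset :
    ∀ (n : ℕ) (J Y : Finset γ), M.Indep J → J ⊆ Y → M.rank Y ≤ J.card + n →
      ∃ K, J ⊆ K ∧ K ⊆ Y ∧ M.Indep K ∧ K.card = M.rank Y := by
  intro n
  induction n with
  | zero =>
    intro J Y hJ hJY h
    exact ⟨J, subset_refl J, hJY, hJ,
      le_antisymm (M.indep_card_le_rank hJ hJY) (by simpa using h)⟩
  | succ n ih =>
    intro J Y hJ hJY h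
    by_cases hle : M.rank Y ≤ J.card
    · exact ⟨J, subset_refl J, hJY, hJ, le_antisymm (M.indep_card_le_rank hJ hJY) hle⟩
    · push_neg at hle
      obtain ⟨K₀, hK₀Y, hK₀, hcard⟩ := M.exists_basis Y
      obtain ⟨x, hxK₀, hxJ, hx⟩ := M.indep_exchange hJ hK₀ (by omega)
      obtain ⟨K, h1, h2, h3, h4⟩ :=
        ih (insert x J) Y hx (insert_subset (hK₀Y hxK₀) hJY)
          (by rw [card_insert_of_notMem hxJ]; omega)
      exact ⟨K, (subset_insert x J).trans h1, h2, h3, h4⟩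

lemma spans_mono {X Y : Finset γ} {a : γ} (hXY : X ⊆ Y) (h : M.Spans X a) : M.Spans Y a := by
  by_cases haY : a ∈ Y
  · unfold Spans; rw [insert_eq_self.mpr haY]
  by_contra hY
  have hYlt : M.rank Y < M.rank (insert a Y) :=
    (M.not_spans_iff).mp hY
  have haX : a ∉ X := fun h' => haY (hXY h')
  obtain ⟨J, hJX, hJ, hJcard⟩ := M.exists_basis X
  obtain ⟨J', hJJ', hJ'Y, hJ', hJ'card⟩ :=
    M.exists_basis_superset (M.rank Y) J Y hJ (hJX.trans hXY) (by omega)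
  obtain ⟨K, hKY, hK, hKcard⟩ := M.exists_basis (insert a Y)
  obtain ⟨x, hxK, hxJ', hx⟩ := M.indep_exchange hJ' hK (by omega)
  have hxa : x = a := by
    by_contra hne
    have hxY : x ∈ Y := by
      rcases mem_insert.mp (hKY hxK) with h' | h'
      · exact absurd h' hne
      · exact h'
    have hle : (insert x J').card ≤ M.rank Y :=
      M.indep_card_le_rank hx (insert_subset hxY hJ'Y)
    rw [card_insert_of_notMem hxJ'] at hle
    omega
  subst hxa
  have hiJ : M.Indep (insert x J) := M.indep_subset hx (insert_subset_insert _ hJJ')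
  have haJ : x ∉ J := fun h' => haX (hJX h')
  have hle : (insert x J).card ≤ M.rank (insert x X) :=
    M.indep_card_le_rank hiJ (insert_subset_insert _ hJX)
  rw [card_insert_of_notMem haJ] at hle
  unfold Spans at h
  omega

lemma rank_union_eq (X : Finset γ) :
    ∀ (Y : Finset γ), (∀ y ∈ Y, M.Spans X y) → M.rank (X ∪ Y) = M.rank X := by
  intro Y
  induction Y using Finset.induction_on with
  | empty => intro _; simp
  | @insert a s ha ih =>
    intro h
    have h1 : M.Spans X a := h a (mem_insert_self a s)
    have h2 := ih (fun y hy => h y (mem_insert_of_mem hy))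
    have h3 : M.Spans (X ∪ s) a := M.spans_mono subset_union_left h1
    calc M.rank (X ∪ insert a s) = M.rank (insert a (X ∪ s)) := by rw [union_insert]
      _ = M.rank (X ∪ s) := h3
      _ = M.rank X := h2

lemma spans_trans {O X : Finset γ} {a : γ} (hX : ∀ x ∈ X, M.Spans O x)
    (ha : M.Spans X a) : M.Spans O a := by
  have h1 : M.rank (O ∪ X) = M.rank O := M.rank_union_eq O X hX
  have h2 : M.Spans (O ∪ X) a := M.spans_mono subset_union_right ha
  have h3 : M.rank O ≤ M.rank (insert a O) := M.rank_mono_s14 (subset_insert a O)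
  have h4 : M.rank (insert a O) ≤ M.rank (insert a (O ∪ X)) :=
    M.rank_mono_s14 (insert_subset_insert _ subset_union_left)
  unfold Spans at h2 ⊢
  omega

lemma mem_opt_iff {w : γ → ℝ} {A : Finset γ} {i : γ} :
    i ∈ M.OPT w A ↔ i ∈ A ∧ 0 < w i ∧
      M.rank (A.filter fun j => w i < w j) <
        M.rank (insert i (A.filter fun j => w i < w j)) := by
  simp [OPT, mem_filter, and_assoc]

lemma opt_indep (w : γ → ℝ) (hinj : Function.Injective w) (A : Finset γ) :
    ∀ I, I ⊆ M.OPT w A → M.Indep I := by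
  intro I
  induction I using Finset.strongInduction with
  | _ I ih =>
    intro hIO
    rcases I.eq_empty_or_nonempty with rfl | hne
    · exact M.indep_empty
    obtain ⟨m, hm, hmin⟩ := Finset.exists_min_image I w hne
    have hJI : I.erase m ⊂ I := erase_ssubset hm
    have hJindep : M.Indep (I.erase m) := ih _ hJI ((erase_subset m I).trans hIO)
    by_contra hInd
    have hmO := M.mem_opt_iff.mp (hIO hm)
    have hJsub : I.erase m ⊆ A.filter fun j => w m < w j := by
      intro j hj
      have hjI : j ∈ I := (erase_subset m I) hj
      have hjA : j ∈ A := (M.mem_opt_iff.mp (hIO hjI)).1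
      have hne' : j ≠ m := (mem_erase.mp hj).1
      have hlt : w m < w j := lt_of_le_of_ne (hmin j hjI) fun e => hne' (hinj e.symm)
      simp [mem_filter, hjA, hlt]
    have hIeq : insert m (I.erase m) = I := insert_erase hm
    have hrankI : M.rank I < I.card := M.rank_lt_card hInd
    have hJcard : (I.erase m).card + 1 = I.card := by
      rw [card_erase_of_mem hm]
      have := card_pos.mpr hne
      omega
    have h1 : M.rank (I.erase m) = (I.erase m).card := M.rank_indep hJindep
    have h2 : (I.erase m).card ≤ M.rank I :=
      M.indep_card_le_rank hJindep (erase_subset m I)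
    have hSpans : M.Spans (I.erase m) m := by
      unfold Spans; rw [hIeq]; omega
    have hSp := M.spans_mono hJsub hSpans
    unfold Spans at hSp
    have h3 := hmO.2.2
    omega

lemma opt_spans (w : γ → ℝ) (A : Finset γ) :
    ∀ n, ∀ a ∈ A, 0 < w a → (A.filter fun j => w a < w j).card < n →
      M.Spans (M.OPT w A) a := by
  intro n
  induction n with
  | zero => intro a _ _ h; omega
  | succ n ih =>
    intro a haA hwa hcard
    by_cases haO : a ∈ M.OPT w A
    · unfold Spans; rw [insert_eq_self.mpr haO]
    · have h1 : M.Spans (A.filter fun j => w a < w j) a := by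
        by_contra h
        rw [M.not_spans_iff] at h
        exact haO (M.mem_opt_iff.mpr ⟨haA, hwa, h⟩)
      apply M.spans_trans _ h1
      intro b hb
      simp only [mem_filter] at hb
      apply ih b hb.1 (lt_trans hwa hb.2)
      have hsub : (A.filter fun j => w b < w j) ⊆ (A.filter fun j => w a < w j) := by
        intro x hx
        simp only [mem_filter] at hx ⊢
        exact ⟨hx.1, lt_trans hb.2 hx.2⟩
      have hbnot : b ∉ (A.filter fun j => w b < w j) := by simp
      have hbin : b ∈ (A.filter fun j => w a < w j) := by
        simp only [mem_filter]; exact hb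
      have hlt : (A.filter fun j => w b < w j).card < (A.filter fun j => w a < w j).card :=
        Finset.card_lt_card ((Finset.ssubset_iff_of_subset hsub).mpr ⟨b, hbin, hbnot⟩)
      omega

lemma opt_card (w : γ → ℝ) (hinj : Function.Injective w) (A : Finset γ) :
    (M.OPT w A).card = M.rank (A.filter fun i => 0 < w i) := by
  have hO : M.Indep (M.OPT w A) := M.opt_indep w hinj A _ (subset_refl _)
  have hsub : M.OPT w A ⊆ A.filter fun i => 0 < w i := by
    intro i hi
    have h := M.mem_opt_iff.mp hi
    simp [mem_filter, h.1, h.2.1]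
  apply le_antisymm (M.indep_card_le_rank hO hsub)
  have h1 : M.rank (M.OPT w A ∪ (A.filter fun i => 0 < w i)) = M.rank (M.OPT w A) := by
    apply M.rank_union_eq
    intro y hy
    simp only [mem_filter] at hy
    exact M.opt_spans w A ((A.filter fun j => w y < w j).card + 1) y hy.1 hy.2 (by omega)
  calc M.rank (A.filter fun i => 0 < w i)
      ≤ M.rank (M.OPT w A ∪ (A.filter fun i => 0 < w i)) := M.rank_mono_s14 subset_union_right
    _ = M.rank (M.OPT w A) := h1
    _ = (M.OPT w A).card := M.rank_indep hO

lemma opt_mem_of_subset {w : γ → ℝ} {S B : Finset γ} (hSB : S ⊆ B) {i : γ}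
    (hiS : i ∈ S) (hiB : i ∈ M.OPT w B) : i ∈ M.OPT w S := by
  have h := M.mem_opt_iff.mp hiB
  apply M.mem_opt_iff.mpr
  refine ⟨hiS, h.2.1, ?_⟩
  rw [← M.not_spans_iff]
  intro hsp
  have hsp' : M.Spans (B.filter fun j => w i < w j) i :=
    M.spans_mono (filter_subset_filter _ hSB) hsp
  have h3 := h.2.2
  unfold Spans at hsp'
  omega

end FinMatroid

/-- `|F ∩ OPT_w(S ∪ F)| ≥ |F ∩ OPT_w(S)|`. -/
theorem stmt14 (M : FinMatroid γ) (w : γ → ℝ) (hw : ∀ i, 0 ≤ w i)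
    (hinj : Function.Injective w) (S F : Finset γ) :
    (F ∩ M.OPT w S).card ≤ (F ∩ M.OPT w (S ∪ F)).card := by
  classical
  set B := S ∪ F with hB
  have hSB : S ⊆ B := subset_union_left
  have hdiff : M.OPT w B \ F ⊆ M.OPT w S \ F := by
    intro i hi
    simp only [mem_sdiff] at hi ⊢
    refine ⟨M.opt_mem_of_subset hSB ?_ hi.1, hi.2⟩
    have hiB : i ∈ B := (M.mem_opt_iff.mp hi.1).1
    rcases mem_union.mp hiB with h | h
    · exact h
    · exact absurd h hi.2
  have hcardS : (M.OPT w S ∩ F).card + (M.OPT w S \ F).card = (M.OPT w S).card :=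
    card_inter_add_card_sdiff _ _
  have hcardB : (M.OPT w B ∩ F).card + (M.OPT w B \ F).card = (M.OPT w B).card :=
    card_inter_add_card_sdiff _ _
  have hrank : (M.OPT w S).card ≤ (M.OPT w B).card := by
    rw [M.opt_card w hinj S, M.opt_card w hinj B]
    exact M.rank_mono_s14 (filter_subset_filter _ hSB)
  have hd : (M.OPT w B \ F).card ≤ (M.OPT w S \ F).card := card_le_card hdiff
  rw [inter_comm F (M.OPT w S), inter_comm F (M.OPT w B)]
  omega
end

section
/- Let M be a matroid with distinct weights, p ∈ (0,1), S a p-sample of the ground set, R the set of improving elements, and F any subset of the ground set. Then E[|OPT_w(S) ∩ F|] ≥ (p/(1−p))·E[|R ∩ F|]. In fact, for each i ∈ F, Pr[i ∈ OPT_w(S)] ≥ (p/(1−p))·Pr[i ∈ R]. -/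
open Finset BigOperators
open scoped Classical

variable {γ : Type*} [DecidableEq γ] [Fintype γ]

lemma prodP_insert {γ : Type*} [DecidableEq γ] [Fintype γ] (p : ℝ) (hp1 : p < 1)
    (i : γ) (T : Finset γ) (hi : i ∉ T) :
    prodP p (insert i T) = (p / (1 - p)) * prodP p T := by
  have hne : (1 : ℝ) - p ≠ 0 := by linarith
  have hc : T.card + 1 ≤ Fintype.card γ := by
    simpa [Finset.card_insert_of_notMem hi] using Finset.card_le_univ (insert i T)
  unfold prodP
  rw [Finset.card_insert_of_notMem hi]
  have h1 : Fintype.card γ - T.card = (Fintype.card γ - (T.card + 1)) + 1 := by omega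
  rw [h1]
  field_simp
  ring

lemma stmt15_aux {γ : Type*} [DecidableEq γ] [Fintype γ] (M : FinMatroid γ) (w : γ → ℝ)
    (p : ℝ) (hp1 : p < 1) (i : γ) :
    ∑ S : Finset γ, prodP p S * (if i ∈ M.OPT w S then (1 : ℝ) else 0) =
      (p / (1 - p)) *
        ∑ S : Finset γ, prodP p S * (if i ∈ M.Improving w S then (1 : ℝ) else 0) := by
  rw [Finset.mul_sum]
  rw [← Finset.sum_filter_add_sum_filter_not Finset.univ (fun S => i ∈ S)
      (fun S => prodP p S * (if i ∈ M.OPT w S then (1:ℝ) else 0))]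
  rw [← Finset.sum_filter_add_sum_filter_not Finset.univ (fun S => i ∈ S)
      (fun S => (p/(1-p)) * (prodP p S * (if i ∈ M.Improving w S then (1:ℝ) else 0)))]
  have hA : ∑ S ∈ Finset.univ.filter (fun S => ¬ i ∈ S),
      prodP p S * (if i ∈ M.OPT w S then (1:ℝ) else 0) = 0 := by
    apply Finset.sum_eq_zero
    intro S hS
    simp only [Finset.mem_filter] at hS
    have : i ∉ M.OPT w S := fun h => hS.2 (Finset.mem_filter.mp h).1
    simp [this]
  have hB : ∑ S ∈ Finset.univ.filter (fun S => i ∈ S),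
      (p/(1-p)) * (prodP p S * (if i ∈ M.Improving w S then (1:ℝ) else 0)) = 0 := by
    apply Finset.sum_eq_zero
    intro S hS
    simp only [Finset.mem_filter] at hS
    have : i ∉ M.Improving w S := by
      intro h
      exact ((Finset.mem_filter.mp h).2).1 hS.2
    simp [this]
  rw [hA, hB, add_zero, zero_add]
  refine Finset.sum_nbij' (fun S => S.erase i) (fun T => insert i T) ?_ ?_ ?_ ?_ ?_
  · intro S hS
    simp only [Finset.mem_filter] at *
    simp
  · intro T hT
    simp only [Finset.mem_filter] at *
    simp
  · intro S hS
    simp only [Finset.mem_filter] at hS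
    exact Finset.insert_erase hS.2
  · intro T hT
    simp only [Finset.mem_filter] at hT
    exact Finset.erase_insert hT.2
  · intro S hS
    simp only [Finset.mem_filter] at hS
    have hiS : i ∈ S := hS.2
    have hie : i ∉ S.erase i := Finset.notMem_erase i S
    have hins : insert i (S.erase i) = S := Finset.insert_erase hiS
    have hmem : i ∈ M.Improving w (S.erase i) ↔ i ∈ M.OPT w S := by
      unfold FinMatroid.Improving
      simp [hie, hins]
    have hprod : prodP p S = (p / (1 - p)) * prodP p (S.erase i) := by
      conv_lhs => rw [← hins]
      exact prodP_insert p hp1 i (S.erase i) hie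
    rw [hprod]
    by_cases h : i ∈ M.OPT w S
    · rw [if_pos h, if_pos (hmem.mpr h)]
      ring
    · rw [if_neg h, if_neg (fun hh => h (hmem.mp hh))]
      ring

/-- `Pr[i ∈ OPT_w(S)] ≥ (p/(1-p)) · Pr[i ∈ R]` for each element `i`, and
consequently `E[|OPT_w(S) ∩ F|] ≥ (p/(1-p)) · E[|R ∩ F|]` for every `F`. -/
theorem stmt15 (M : FinMatroid γ) (w : γ → ℝ) (hw : ∀ i, 0 ≤ w i)
    (hinj : Function.Injective w) (p : ℝ) (hp0 : 0 < p) (hp1 : p < 1) :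
    (∀ i : γ,
      ∑ S : Finset γ, prodP p S * (if i ∈ M.OPT w S then (1 : ℝ) else 0) ≥
        (p / (1 - p)) *
          ∑ S : Finset γ, prodP p S * (if i ∈ M.Improving w S then (1 : ℝ) else 0)) ∧
    ∀ F : Finset γ,
      ∑ S : Finset γ, prodP p S * ((M.OPT w S ∩ F).card : ℝ) ≥
        (p / (1 - p)) *
          ∑ S : Finset γ, prodP p S * ((M.Improving w S ∩ F).card : ℝ) := by
  have hpdiv : (0:ℝ) ≤ p / (1 - p) := by
    apply div_nonneg hp0.le
    linarith
  constructor
  · intro i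
    exact ge_of_eq (stmt15_aux M w p hp1 i)
  · intro F
    have hcard : ∀ (A : Finset γ), ((A ∩ F).card : ℝ) =
        ∑ i ∈ F, (if i ∈ A then (1:ℝ) else 0) := by
      intro A
      rw [Finset.sum_ite_mem F A (fun _ => (1:ℝ)), Finset.sum_const, Finset.inter_comm]
      simp
    calc ∑ S : Finset γ, prodP p S * ((M.OPT w S ∩ F).card : ℝ)
        = ∑ i ∈ F, ∑ S : Finset γ, prodP p S * (if i ∈ M.OPT w S then (1:ℝ) else 0) := by
          rw [Finset.sum_comm]
          exact Finset.sum_congr rfl fun S _ => by rw [hcard, Finset.mul_sum]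
      _ = ∑ i ∈ F, (p / (1 - p)) *
            ∑ S : Finset γ, prodP p S * (if i ∈ M.Improving w S then (1:ℝ) else 0) :=
          Finset.sum_congr rfl fun i _ => stmt15_aux M w p hp1 i
      _ = (p / (1 - p)) * ∑ S : Finset γ, prodP p S * ((M.Improving w S ∩ F).card : ℝ) := by
          rw [← Finset.mul_sum, Finset.sum_comm]
          congr 1
          exact Finset.sum_congr rfl fun S _ => by rw [hcard, Finset.mul_sum]
      _ ≥ _ := le_refl _
end

section
/- For the 1-uniform matroid on n elements and the improving-element distribution with parameter p (listing elements 1,...,n in decreasing weight order, Pr[R = {1,...,k}] = p(1−p)^k for 0 ≤ k < n and Pr[R = {1,...,n}] = (1−p)^n), any online contention resolution map in the worst-case arrival order 1,2,...,n that is α-competitive must satisfy α ≥ n. -/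
open Finset BigOperators

/-- Geometric tail: `∑_{k=i}^{n-1} p(1-p)^k + (1-p)^n = (1-p)^i`. -/
lemma tail_sum (p : ℝ) (i n : ℕ) (h : i ≤ n) :
    (∑ k ∈ Finset.Ico i n, p * (1 - p) ^ k) + (1 - p) ^ n = (1 - p) ^ i := by
  induction n with
  | zero => simp [Nat.le_zero.mp h]
  | succ m ih =>
    rcases Nat.lt_or_ge i (m + 1) with hlt | hge
    · have him : i ≤ m := Nat.lt_succ_iff.mp hlt
      rw [Finset.sum_Ico_succ_top him]
      have h2 := ih him
      have h3 : p * (1 - p) ^ m + (1 - p) ^ (m + 1) = (1 - p) ^ m := by ring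
      linarith
    · have : i = m + 1 := le_antisymm h hge
      subst this; simp

/-- for the 1-uniform matroid on elements `1,…,n` (decreasing weight order)
and the improving-element distribution `Pr[R = {1,…,k}] = p(1-p)^k` for `0 ≤ k < n`,
`Pr[R = {1,…,n}] = (1-p)^n`, any `a`-competitive online contention resolution map in
arrival order `1,2,…,n` must have `a ≥ n`. Here `sel i k` is the probability the map
selects element `i` when `R = {1,…,k}`; since at step `i` the map cannot distinguish
realizations `{1,…,k}` with `k ≥ i`, `sel i k` is constant over such `k`; at most one
element is selected; `i` cannot be selected unless `i ∈ R`; and `a`-competitiveness says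
`Pr[i selected] ≥ (1/a)·Pr[i ∈ R] = (1/a)·(1-p)^i`. -/
theorem stmt17 (n : ℕ) (hn : 0 < n) (p a : ℝ) (hp0 : 0 < p) (hp1 : p < 1) (ha : 0 < a)
    (sel : ℕ → ℕ → ℝ)
    (hnn : ∀ i k, 0 ≤ sel i k)
    (hinactive : ∀ i k, k < i → sel i k = 0)
    (honline : ∀ i k k', i ≤ k → i ≤ k' → sel i k = sel i k')
    (hfeas : ∀ k, ∑ i ∈ Finset.Icc 1 k, sel i k ≤ 1)
    (hcomp : ∀ i, 1 ≤ i → i ≤ n →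
      ∑ k ∈ Finset.range (n + 1),
          (if k < n then p * (1 - p) ^ k else (1 - p) ^ n) * sel i k ≥
        (1 / a) * (1 - p) ^ i) :
    (n : ℝ) ≤ a := by
  have hx : 0 < 1 - p := by linarith
  -- key: for 1 ≤ i ≤ n, sel i n ≥ 1/a
  have key : ∀ i, 1 ≤ i → i ≤ n → 1 / a ≤ sel i n := by
    intro i h1 h2
    have hc := hcomp i h1 h2
    -- compute the sum
    have hsum : ∑ k ∈ Finset.range (n + 1),
        (if k < n then p * (1 - p) ^ k else (1 - p) ^ n) * sel i k
        = sel i n * (1 - p) ^ i := by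
      have hsplit : Finset.range (n + 1) = Finset.Ico 0 i ∪ Finset.Ico i (n + 1) := by
        rw [Finset.range_eq_Ico, Finset.Ico_union_Ico_eq_Ico (Nat.zero_le i)
          (Nat.le_succ_of_le h2)]
      rw [hsplit, Finset.sum_union (by
        apply Finset.Ico_disjoint_Ico_consecutive)]
      have h0 : ∑ k ∈ Finset.Ico 0 i,
          (if k < n then p * (1 - p) ^ k else (1 - p) ^ n) * sel i k = 0 := by
        apply Finset.sum_eq_zero
        intro k hk
        rw [hinactive i k (Finset.mem_Ico.mp hk).2, mul_zero]
      rw [h0, zero_add]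
      have h1' : ∑ k ∈ Finset.Ico i (n + 1),
          (if k < n then p * (1 - p) ^ k else (1 - p) ^ n) * sel i k
          = ∑ k ∈ Finset.Ico i (n + 1),
          (if k < n then p * (1 - p) ^ k else (1 - p) ^ n) * sel i n := by
        apply Finset.sum_congr rfl
        intro k hk
        rw [honline i k n (Finset.mem_Ico.mp hk).1 h2]
      rw [h1', ← Finset.sum_mul, mul_comm]
      congr 1
      rw [Finset.sum_Ico_succ_top h2, if_neg (lt_irrefl n)]
      have := tail_sum p i n h2
      rw [← this]
      congr 1
      apply Finset.sum_congr rfl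
      intro k hk
      rw [if_pos (Finset.mem_Ico.mp hk).2]
    rw [hsum] at hc
    have hxp : (0:ℝ) < (1 - p) ^ i := pow_pos hx i
    exact le_of_mul_le_mul_right hc hxp
  -- feasibility at n
  have hsum_ge : (n : ℝ) * (1 / a) ≤ ∑ i ∈ Finset.Icc 1 n, sel i n := by
    have : ∑ i ∈ Finset.Icc 1 n, (1 / a) ≤ ∑ i ∈ Finset.Icc 1 n, sel i n := by
      apply Finset.sum_le_sum
      intro i hi
      exact key i (Finset.mem_Icc.mp hi).1 (Finset.mem_Icc.mp hi).2
    simpa [Nat.card_Icc] using this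
  have := le_trans hsum_ge (hfeas n)
  rw [mul_one_div, div_le_one ha] at this
  exact this
end
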